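/- arXiv:1607.00041 — 3 statements merged into one kernel-verified Lean document; each statement's English description precedes it below -/
import Mathlib

section
/- Let σ be a full-rank state in M_d and p > 1. Then the supremum over all states ρ of the sandwiched p-Rényi divergence D_p(ρ‖σ) equals log(‖σ^{-1}‖_∞), where ‖σ^{-1}‖_∞ is the operator norm of σ^{-1} (i.e. the reciprocal of the smallest eigenvalue of σ), and this supremum is attained. -/
open scoped BigOperators Matrix ComplexOrder

noncomputable section

namespace SRC

variable {ι : Type*} [Fintype ι] [DecidableEq ι]

/-- Real power of a Hermitian matrix via the spectral decomposition
(junk value `0` on non-Hermitian input). -/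
def mpow (A : Matrix ι ι ℂ) (c : ℝ) : Matrix ι ι ℂ :=
  if hA : A.IsHermitian then
    (hA.eigenvectorUnitary : Matrix ι ι ℂ) *
      Matrix.diagonal (fun i => ((hA.eigenvalues i ^ c : ℝ) : ℂ)) *
      star (hA.eigenvectorUnitary : Matrix ι ι ℂ)
  else 0

/-- Logarithm of a Hermitian matrix via the spectral decomposition. -/
def mlog (A : Matrix ι ι ℂ) : Matrix ι ι ℂ :=
  if hA : A.IsHermitian then
    (hA.eigenvectorUnitary : Matrix ι ι ℂ) *
      Matrix.diagonal (fun i => ((Real.log (hA.eigenvalues i) : ℝ) : ℂ)) *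
      star (hA.eigenvectorUnitary : Matrix ι ι ℂ)
  else 0

/-- Real part of the trace. -/
def rtr (A : Matrix ι ι ℂ) : ℝ := (Matrix.trace A).re

/-- Absolute value |A| = (AᴴA)^{1/2} of a matrix. -/
def mabs (A : Matrix ι ι ℂ) : Matrix ι ι ℂ := mpow (Aᴴ * A) (1/2)

/-- Trace norm. -/
def traceNorm (A : Matrix ι ι ℂ) : ℝ := rtr (mabs A)

/-- Operator norm of a Hermitian matrix: the largest absolute value of an eigenvalue. -/
def opNorm (A : Matrix ι ι ℂ) : ℝ :=
  if hA : A.IsHermitian then ⨆ i, |hA.eigenvalues i| else 0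

/-- Weighted noncommutative `p`-norm `‖X‖_{p,σ}`. -/
def wnorm (σ : Matrix ι ι ℂ) (p : ℝ) (X : Matrix ι ι ℂ) : ℝ :=
  (rtr (mpow (mabs (mpow σ (1/(2*p)) * X * mpow σ (1/(2*p)))) p)) ^ (1/p)

/-- Weighted inner product `⟨X,Y⟩_σ = tr[σ^{1/2} X σ^{1/2} Y]` (real part). -/
def winner (σ X Y : Matrix ι ι ℂ) : ℝ := rtr (mpow σ (1/2) * X * mpow σ (1/2) * Y)

/-- Conjugation `X ↦ A X A` as a linear map. -/
def conjLin (A : Matrix ι ι ℂ) : Matrix ι ι ℂ →ₗ[ℂ] Matrix ι ι ℂ where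
  toFun X := A * X * A
  map_add' X Y := by simp [Matrix.mul_add, Matrix.add_mul]
  map_smul' c X := by simp [Matrix.mul_smul, Matrix.smul_mul]

/-- `Φ̂ = Γ_σ^{-1} ∘ Φ ∘ Γ_σ` where `Γ_σ(X) = σ^{1/2} X σ^{1/2}`. -/
def hatMap (σ : Matrix ι ι ℂ) (Φ : Matrix ι ι ℂ →ₗ[ℂ] Matrix ι ι ℂ) :
    Matrix ι ι ℂ →ₗ[ℂ] Matrix ι ι ℂ :=
  (conjLin (mpow σ (-(1/2)))).comp (Φ.comp (conjLin (mpow σ (1/2))))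

/-- The power operator `I_{r,p}(X) = σ^{-1/(2r)} (σ^{1/(2p)} X σ^{1/(2p)})^{p/r} σ^{-1/(2r)}`. -/
def Ipow (σ : Matrix ι ι ℂ) (r p : ℝ) (X : Matrix ι ι ℂ) : Matrix ι ι ℂ :=
  mpow σ (-(1/(2*r))) * mpow (mpow σ (1/(2*p)) * X * mpow σ (1/(2*p))) (p/r) *
    mpow σ (-(1/(2*r)))

/-- The `p`-Dirichlet form `E_p(X) = -(p/(2(p-1))) ⟨I_{q,p}(X), L̂(X)⟩_σ` with `1/p + 1/q = 1`. -/
def dirichlet (σ : Matrix ι ι ℂ) (L : Matrix ι ι ℂ →ₗ[ℂ] Matrix ι ι ℂ) (p : ℝ)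
    (X : Matrix ι ι ℂ) : ℝ :=
  -(p/(2*(p-1))) * winner σ (Ipow σ (p/(p-1)) p X) (hatMap σ L X)

/-- The `2`-Dirichlet form `E_2(X) = -⟨X, L̂(X)⟩_σ`. -/
def dirichlet2 (σ : Matrix ι ι ℂ) (L : Matrix ι ι ℂ →ₗ[ℂ] Matrix ι ι ℂ)
    (X : Matrix ι ι ℂ) : ℝ :=
  -winner σ X (hatMap σ L X)

/-- `κ_p(X) = (1/(p-1)) ‖X‖_{p,σ}^p log(‖X‖_{p,σ}^p / ‖X‖_{1,σ}^p)`. -/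
def kappa (σ : Matrix ι ι ℂ) (p : ℝ) (X : Matrix ι ι ℂ) : ℝ :=
  (1/(p-1)) * (wnorm σ p X) ^ p * Real.log ((wnorm σ p X) ^ p / (wnorm σ 1 X) ^ p)

/-- `β_p(L)`. -/
def betaP (σ : Matrix ι ι ℂ) (L : Matrix ι ι ℂ →ₗ[ℂ] Matrix ι ι ℂ) (p : ℝ) : ℝ :=
  sSup {β : ℝ | 0 ≤ β ∧ ∀ X : Matrix ι ι ℂ, X.PosDef → β * kappa σ p X ≤ dirichlet σ L p X}

/-- `β_2(L)` (defined with the `2`-Dirichlet form). -/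
def beta2 (σ : Matrix ι ι ℂ) (L : Matrix ι ι ℂ →ₗ[ℂ] Matrix ι ι ℂ) : ℝ :=
  sSup {β : ℝ | 0 ≤ β ∧ ∀ X : Matrix ι ι ℂ, X.PosDef → β * kappa σ 2 X ≤ dirichlet2 σ L X}

/-- Variance `Var_σ(X) = ‖X‖_{2,σ}² - ‖X‖_{1,σ}²`. -/
def Var (σ X : Matrix ι ι ℂ) : ℝ := (wnorm σ 2 X) ^ (2:ℝ) - (wnorm σ 1 X) ^ (2:ℝ)

/-- Spectral gap `λ(L)`. -/
def gap (σ : Matrix ι ι ℂ) (L : Matrix ι ι ℂ →ₗ[ℂ] Matrix ι ι ℂ) : ℝ :=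
  sSup {lam : ℝ | 0 ≤ lam ∧ ∀ X : Matrix ι ι ℂ, X.PosDef → lam * Var σ X ≤ dirichlet2 σ L X}

/-- Operator-valued relative entropy `S_p(X) = -p (d/ds) I_{p+s,p}(X)|_{s=0}` (entrywise). -/
def Sp (σ : Matrix ι ι ℂ) (p : ℝ) (X : Matrix ι ι ℂ) : Matrix ι ι ℂ :=
  Matrix.of fun i j => -(p : ℂ) * deriv (fun s : ℝ => Ipow σ (p + s) p X i j) 0

/-- `p`-relative entropy `Ent_{p,σ}(X)`. -/
def entP (σ : Matrix ι ι ℂ) (p : ℝ) (X : Matrix ι ι ℂ) : ℝ :=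
  winner σ (Ipow σ (p/(p-1)) p X) (Sp σ p X) - (wnorm σ p X) ^ p * Real.log (wnorm σ p X)

/-- Logarithmic Sobolev constant `α_p(L)`. -/
def alphaP (σ : Matrix ι ι ℂ) (L : Matrix ι ι ℂ →ₗ[ℂ] Matrix ι ι ℂ) (p : ℝ) : ℝ :=
  sSup {α : ℝ | 0 ≤ α ∧ ∀ X : Matrix ι ι ℂ, X.PosDef → α * entP σ p X ≤ dirichlet σ L p X}

/-- Explicit `2`-relative entropy. -/
def ent2 (σ X : Matrix ι ι ℂ) : ℝ :=
  rtr ((mpow σ (1/4) * X * mpow σ (1/4)) ^ 2 *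
      mlog ((wnorm σ 2 X)⁻¹ • (mpow σ (1/4) * X * mpow σ (1/4)))) -
    (1/2) * rtr ((mpow σ (1/4) * X * mpow σ (1/4)) ^ 2 * mlog σ)

/-- Logarithmic Sobolev constant `α_2(L)`. -/
def alpha2 (σ : Matrix ι ι ℂ) (L : Matrix ι ι ℂ →ₗ[ℂ] Matrix ι ι ℂ) : ℝ :=
  sSup {α : ℝ | 0 ≤ α ∧ ∀ X : Matrix ι ι ℂ, X.PosDef → α * ent2 σ X ≤ dirichlet2 σ L X}

/-- Sandwiched `p`-Rényi divergence. -/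
def sandDiv (p : ℝ) (ρ σ : Matrix ι ι ℂ) : ℝ :=
  (1/(p-1)) * Real.log (rtr (mpow (mpow σ ((1-p)/(2*p)) * ρ * mpow σ ((1-p)/(2*p))) p))

/-- A quantum state. -/
def IsState (ρ : Matrix ι ι ℂ) : Prop := ρ.PosSemidef ∧ ρ.trace = 1

/-- Complete positivity. -/
def IsCP (Φ : Matrix ι ι ℂ →ₗ[ℂ] Matrix ι ι ℂ) : Prop :=
  ∀ (n : ℕ) (M : Matrix (Fin n × ι) (Fin n × ι) ℂ), M.PosSemidef →
    (Matrix.of fun (r c : Fin n × ι) => Φ (Matrix.of fun a b => M (r.1, a) (c.1, b)) r.2 c.2).PosSemidef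

/-- Trace preservation. -/
def IsTP (Φ : Matrix ι ι ℂ →ₗ[ℂ] Matrix ι ι ℂ) : Prop :=
  ∀ X : Matrix ι ι ℂ, (Φ X).trace = X.trace

/-- Quantum channel: completely positive and trace preserving. -/
def IsChannel (Φ : Matrix ι ι ℂ →ₗ[ℂ] Matrix ι ι ℂ) : Prop := IsCP Φ ∧ IsTP Φ

/-- The semigroup `e^{tL}` generated by a linear map `L` on matrices. -/
def expMap (L : Matrix ι ι ℂ →ₗ[ℂ] Matrix ι ι ℂ) (t : ℝ) :
    Matrix ι ι ℂ →ₗ[ℂ] Matrix ι ι ℂ :=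
  Matrix.toLin (Matrix.stdBasis ℂ ι ι) (Matrix.stdBasis ℂ ι ι)
    (NormedSpace.exp
      ((t : ℂ) • LinearMap.toMatrix (Matrix.stdBasis ℂ ι ι) (Matrix.stdBasis ℂ ι ι) L))

/-- Liouvillian: generator of a semigroup of quantum channels. -/
def IsLiouvillian (L : Matrix ι ι ℂ →ₗ[ℂ] Matrix ι ι ℂ) : Prop :=
  ∀ t : ℝ, 0 ≤ t → IsChannel (expMap L t)

/-- Primitive Liouvillian with (unique, full-rank) fixed point `σ`. -/
def IsPrimitive (L : Matrix ι ι ℂ →ₗ[ℂ] Matrix ι ι ℂ) (σ : Matrix ι ι ℂ) : Prop :=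
  IsLiouvillian L ∧ σ.PosDef ∧ σ.trace = 1 ∧ L σ = 0 ∧
    (∀ τ : Matrix ι ι ℂ, IsState τ → L τ = 0 → τ = σ) ∧
    ∀ ρ : Matrix ι ι ℂ, IsState ρ →
      Filter.Tendsto (fun t : ℝ => expMap L t ρ) Filter.atTop (nhds σ)

/-- Reversibility (detailed balance): `L̂ = L*` w.r.t. the Hilbert–Schmidt inner product. -/
def IsReversible (σ : Matrix ι ι ℂ) (L : Matrix ι ι ℂ →ₗ[ℂ] Matrix ι ι ℂ) : Prop :=
  ∀ X Y : Matrix ι ι ℂ,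
    Matrix.trace ((hatMap σ L X)ᴴ * Y) = Matrix.trace (Xᴴ * L Y)

/-- Primitive quantum channel with full-rank fixed point `σ`. -/
def IsPrimitiveChannel (T : Matrix ι ι ℂ →ₗ[ℂ] Matrix ι ι ℂ) (σ : Matrix ι ι ℂ) : Prop :=
  IsChannel T ∧ σ.PosDef ∧ σ.trace = 1 ∧ T σ = σ ∧
    ∀ ρ : Matrix ι ι ℂ, IsState ρ →
      Filter.Tendsto (fun n : ℕ => (⇑T)^[n] ρ) Filter.atTop (nhds σ)

/-- The constant `β_D(T)` for a quantum channel. -/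
def betaD (σ : Matrix ι ι ℂ) (T : Matrix ι ι ℂ →ₗ[ℂ] Matrix ι ι ℂ) : ℝ :=
  sSup {β : ℝ | 0 ≤ β ∧ ∀ X : Matrix ι ι ℂ, X.PosDef →
    β * kappa σ 2 X ≤ (wnorm σ 2 X) ^ (2:ℝ) - (wnorm σ 2 (hatMap σ T X)) ^ (2:ℝ)}

/-- Hilbert–Schmidt adjoint of a linear map on matrices. -/
def hsAdjoint (T : Matrix ι ι ℂ →ₗ[ℂ] Matrix ι ι ℂ) : Matrix ι ι ℂ →ₗ[ℂ] Matrix ι ι ℂ where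
  toFun X := Matrix.of fun i j => Matrix.trace ((T (Matrix.single i j 1))ᴴ * X)
  map_add' X Y := by
    ext i j
    simp [Matrix.mul_add, Matrix.trace_add]
  map_smul' c X := by
    ext i j
    simp [Matrix.mul_smul, Matrix.trace_smul]

/-- The depolarizing Liouvillian `ρ ↦ tr(ρ)·σ - ρ`. -/
def depol (σ : Matrix ι ι ℂ) : Matrix ι ι ℂ →ₗ[ℂ] Matrix ι ι ℂ where
  toFun ρ := ρ.trace • σ - ρ
  map_add' ρ₁ ρ₂ := by
    simp [Matrix.trace_add, add_smul]
    abel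
  map_smul' c ρ := by
    simp [Matrix.trace_smul, smul_smul, smul_sub]

/-- Action of a map on the `i`-th tensor factor: `id^{⊗(i-1)} ⊗ Φ ⊗ id^{⊗(n-i)}`. -/
def localApply {d : ℕ} (n : ℕ)
    (Φ : Matrix (Fin d) (Fin d) ℂ →ₗ[ℂ] Matrix (Fin d) (Fin d) ℂ) (i : Fin n) :
    Matrix (Fin n → Fin d) (Fin n → Fin d) ℂ →ₗ[ℂ] Matrix (Fin n → Fin d) (Fin n → Fin d) ℂ where
  toFun M := Matrix.of fun x y =>
    Φ (Matrix.of fun a b => M (Function.update x i a) (Function.update y i b)) (x i) (y i)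
  map_add' M N := by
    ext x y
    have h : (Matrix.of fun a b => (M + N) (Function.update x i a) (Function.update y i b)) =
        (Matrix.of fun a b => M (Function.update x i a) (Function.update y i b)) +
        (Matrix.of fun a b => N (Function.update x i a) (Function.update y i b)) := rfl
    show Φ (Matrix.of fun a b => (M + N) (Function.update x i a) (Function.update y i b))
        (x i) (y i) = _
    rw [h, map_add]
    rfl
  map_smul' c M := by
    ext x y
    have h : (Matrix.of fun a b => (c • M) (Function.update x i a) (Function.update y i b)) =
        c • (Matrix.of fun a b => M (Function.update x i a) (Function.update y i b)) := rfl
    show Φ (Matrix.of fun a b => (c • M) (Function.update x i a) (Function.update y i b))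
        (x i) (y i) = _
    rw [h, map_smul]
    rfl

/-- The tensor power `σ^{⊗n}` of a matrix. -/
def tensPow {d : ℕ} (σ : Matrix (Fin d) (Fin d) ℂ) (n : ℕ) :
    Matrix (Fin n → Fin d) (Fin n → Fin d) ℂ :=
  Matrix.of fun x y => ∏ i, σ (x i) (y i)


/-- conjugation of a real diagonal by a unitary -/
def cdiag (U : Matrix.unitaryGroup ι ℂ) (g : ι → ℝ) : Matrix ι ι ℂ :=
  (U : Matrix ι ι ℂ) * Matrix.diagonal (fun i => ((g i : ℝ) : ℂ)) * star (U : Matrix ι ι ℂ)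

lemma star_mul_self' (U : Matrix.unitaryGroup ι ℂ) :
    star (U : Matrix ι ι ℂ) * (U : Matrix ι ι ℂ) = 1 := Unitary.coe_star_mul_self U

lemma mul_star_self' (U : Matrix.unitaryGroup ι ℂ) :
    (U : Matrix ι ι ℂ) * star (U : Matrix ι ι ℂ) = 1 := Unitary.coe_mul_star_self U

lemma cdiag_isHermitian (U : Matrix.unitaryGroup ι ℂ) (g : ι → ℝ) :
    (cdiag U g).IsHermitian := by
  have hD : (Matrix.diagonal (fun i => ((g i : ℝ) : ℂ))).IsHermitian :=
    Matrix.isHermitian_diagonal_of_self_adjoint _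
      (funext fun i => Complex.conj_ofReal (g i))
  have := Matrix.isHermitian_mul_mul_conjTranspose (U : Matrix ι ι ℂ) hD
  rwa [← Matrix.star_eq_conjTranspose] at this

lemma cdiag_mul (U : Matrix.unitaryGroup ι ℂ) (g h : ι → ℝ) :
    cdiag U g * cdiag U h = cdiag U (g * h) := by
  unfold cdiag
  have h1 : ∀ M N : Matrix ι ι ℂ,
      ((U : Matrix ι ι ℂ) * M * star (U : Matrix ι ι ℂ)) *
        ((U : Matrix ι ι ℂ) * N * star (U : Matrix ι ι ℂ)) =
      (U : Matrix ι ι ℂ) * (M * N) * star (U : Matrix ι ι ℂ) := by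
    intro M N
    calc ((U : Matrix ι ι ℂ) * M * star (U : Matrix ι ι ℂ)) *
        ((U : Matrix ι ι ℂ) * N * star (U : Matrix ι ι ℂ))
        = (U : Matrix ι ι ℂ) * M * ((star (U : Matrix ι ι ℂ) * (U : Matrix ι ι ℂ)) *
            (N * star (U : Matrix ι ι ℂ))) := by
          simp only [Matrix.mul_assoc]
      _ = (U : Matrix ι ι ℂ) * (M * N) * star (U : Matrix ι ι ℂ) := by
          rw [star_mul_self', Matrix.one_mul]; simp only [Matrix.mul_assoc]
  rw [h1, Matrix.diagonal_mul_diagonal]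
  rw [show (fun i => ((g i : ℝ) : ℂ) * ((h i : ℝ) : ℂ)) = fun i => (((g * h) i : ℝ) : ℂ) from
    funext fun i => by push_cast [Pi.mul_apply]; ring]

lemma trace_conj (U : Matrix.unitaryGroup ι ℂ) (M : Matrix ι ι ℂ) :
    ((U : Matrix ι ι ℂ) * M * star (U : Matrix ι ι ℂ)).trace = M.trace := by
  rw [Matrix.trace_mul_cycle, star_mul_self', Matrix.one_mul]

lemma cdiag_trace (U : Matrix.unitaryGroup ι ℂ) (g : ι → ℝ) :
    (cdiag U g).trace = ∑ i, ((g i : ℝ) : ℂ) := by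
  rw [cdiag, trace_conj, Matrix.trace_diagonal]

lemma rtr_cdiag (U : Matrix.unitaryGroup ι ℂ) (g : ι → ℝ) :
    rtr (cdiag U g) = ∑ i, g i := by
  rw [rtr, cdiag_trace]
  rw [Complex.re_sum]
  simp

lemma cdiag_psd (U : Matrix.unitaryGroup ι ℂ) {g : ι → ℝ} (hg : ∀ i, 0 ≤ g i) :
    (cdiag U g).PosSemidef := by
  have hD : (Matrix.diagonal (fun i => ((g i : ℝ) : ℂ))).PosSemidef :=
    Matrix.PosSemidef.diagonal (by
      rw [Pi.le_def]; intro i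
      simpa using Complex.zero_le_real.mpr (hg i))
  have := hD.mul_mul_conjTranspose_same (U : Matrix ι ι ℂ)
  rwa [← Matrix.star_eq_conjTranspose] at this

lemma cdiag_psd_rev (U : Matrix.unitaryGroup ι ℂ) {g : ι → ℝ}
    (h : (cdiag U g).PosSemidef) : ∀ i, 0 ≤ g i := by
  have h2 := h.conjTranspose_mul_mul_same (U : Matrix ι ι ℂ)
  have h3 : (U : Matrix ι ι ℂ)ᴴ * cdiag U g * (U : Matrix ι ι ℂ) =
      Matrix.diagonal (fun i => ((g i : ℝ) : ℂ)) := by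
    rw [← Matrix.star_eq_conjTranspose, cdiag]
    calc star (U : Matrix ι ι ℂ) * ((U : Matrix ι ι ℂ) *
          Matrix.diagonal (fun i => ((g i : ℝ) : ℂ)) * star (U : Matrix ι ι ℂ)) *
          (U : Matrix ι ι ℂ)
        = (star (U : Matrix ι ι ℂ) * (U : Matrix ι ι ℂ)) *
            Matrix.diagonal (fun i => ((g i : ℝ) : ℂ)) *
            (star (U : Matrix ι ι ℂ) * (U : Matrix ι ι ℂ)) := by
          simp only [Matrix.mul_assoc]
      _ = Matrix.diagonal (fun i => ((g i : ℝ) : ℂ)) := by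
          rw [star_mul_self']; simp
  rw [h3] at h2
  intro i
  have := Matrix.posSemidef_diagonal_iff.mp h2 i
  rwa [Complex.zero_le_real] at this

lemma cdiag_spectrum (U : Matrix.unitaryGroup ι ℂ) (g : ι → ℝ) :
    spectrum ℝ (cdiag U g) = Set.range g := by
  ext x
  rw [cdiag, Unitary.spectrum_star_right_conjugate, ← spectrum.algebraMap_mem_iff ℂ,
    spectrum_diagonal]
  simp only [Set.mem_range, Complex.coe_algebraMap]
  constructor
  · rintro ⟨i, hi⟩
    exact ⟨i, by exact_mod_cast hi⟩
  · rintro ⟨i, hi⟩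
    exact ⟨i, by exact_mod_cast hi⟩

lemma cdiag_eigs_range (U : Matrix.unitaryGroup ι ℂ) (g : ι → ℝ)
    (hX : (cdiag U g).IsHermitian) : Set.range hX.eigenvalues = Set.range g :=
  hX.spectrum_real_eq_range_eigenvalues.symm.trans (cdiag_spectrum U g)

lemma eigs_range_of_eq {X : Matrix ι ι ℂ} (hX : X.IsHermitian) (U : Matrix.unitaryGroup ι ℂ)
    (g : ι → ℝ) (hEq : X = cdiag U g) : Set.range hX.eigenvalues = Set.range g := by
  rw [← hX.spectrum_real_eq_range_eigenvalues, hEq, cdiag_spectrum]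

lemma spectral_cdiag {X : Matrix ι ι ℂ} (hX : X.IsHermitian) :
    X = cdiag hX.eigenvectorUnitary hX.eigenvalues := by
  conv_lhs => rw [hX.spectral_theorem]
  rfl

lemma trace_eq_sum_eigs {X : Matrix ι ι ℂ} (hX : X.IsHermitian) :
    X.trace = ∑ i, ((hX.eigenvalues i : ℝ) : ℂ) := by
  conv_lhs => rw [spectral_cdiag hX]
  rw [cdiag_trace]

lemma rtr_eq_sum_eigs {X : Matrix ι ι ℂ} (hX : X.IsHermitian) :
    rtr X = ∑ i, hX.eigenvalues i := by
  rw [rtr, trace_eq_sum_eigs hX, Complex.re_sum]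
  simp

lemma mpow_eq {X : Matrix ι ι ℂ} (hX : X.IsHermitian) (c : ℝ) :
    mpow X c = cdiag hX.eigenvectorUnitary (fun i => hX.eigenvalues i ^ c) := by
  rw [mpow, dif_pos hX]
  rfl

lemma rtr_mpow {X : Matrix ι ι ℂ} (hX : X.IsHermitian) (c : ℝ) :
    rtr (mpow X c) = ∑ i, hX.eigenvalues i ^ c := by
  rw [mpow_eq hX, rtr_cdiag]

lemma smul_one_sub_cdiag (U : Matrix.unitaryGroup ι ℂ) (g : ι → ℝ) (c : ℝ) :
    cdiag U (fun i => c - g i) = ((c : ℂ) • (1 : Matrix ι ι ℂ)) - cdiag U g := by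
  have hc : (c : ℂ) • (1 : Matrix ι ι ℂ) = Matrix.diagonal fun _ => (c : ℂ) :=
    Matrix.smul_one_eq_diagonal _
  unfold cdiag
  have hd : (Matrix.diagonal fun i => ((c - g i : ℝ) : ℂ))
      = Matrix.diagonal (fun _ : ι => (c : ℂ)) - Matrix.diagonal (fun i => ((g i : ℝ) : ℂ)) := by
    ext i j
    rcases eq_or_ne i j with rfl | h
    · simp only [Matrix.diagonal_apply_eq, Matrix.sub_apply]
      push_cast
      ring
    · simp [Matrix.diagonal_apply_ne _ h]
  rw [hd, Matrix.mul_sub, Matrix.sub_mul, ← hc]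
  congr 1
  rw [Matrix.mul_smul, Matrix.mul_one, Matrix.smul_mul, mul_star_self']

lemma eig_le_of_psd {X : Matrix ι ι ℂ} (hX : X.IsHermitian) {c : ℝ}
    (h : ((c : ℂ) • (1 : Matrix ι ι ℂ) - X).PosSemidef) : ∀ i, hX.eigenvalues i ≤ c := by
  intro i
  have h1 : ((c : ℂ) • (1 : Matrix ι ι ℂ) - X)
      = cdiag hX.eigenvectorUnitary (fun j => c - hX.eigenvalues j) := by
    conv_lhs => rw [spectral_cdiag hX]
    exact (smul_one_sub_cdiag _ _ c).symm
  rw [h1] at h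
  have := cdiag_psd_rev _ h i
  linarith

lemma psd_diag_entry_nonneg {M : Matrix ι ι ℂ} (hM : M.PosSemidef) (i : ι) :
    0 ≤ M i i := by
  exact hM.diag_nonneg

lemma psd_trace_nonneg {M : Matrix ι ι ℂ} (hM : M.PosSemidef) : 0 ≤ M.trace :=
  Finset.sum_nonneg fun i _ => psd_diag_entry_nonneg hM i

lemma rtr_nonneg_of_psd {M : Matrix ι ι ℂ} (hM : M.PosSemidef) : 0 ≤ rtr M :=
  (Complex.le_def.mp (psd_trace_nonneg hM)).1

lemma rtr_mul_psd_nonneg {M N : Matrix ι ι ℂ} (hM : M.PosSemidef) (hN : N.PosSemidef) :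
    0 ≤ rtr (M * N) := by
  obtain ⟨B, rfl⟩ : ∃ B : Matrix ι ι ℂ, M = Bᴴ * B := by
    open scoped MatrixOrder in
    obtain ⟨B, hB⟩ := CStarAlgebra.nonneg_iff_eq_star_mul_self.mp hM.nonneg
    exact ⟨B, by rw [hB, Matrix.star_eq_conjTranspose]⟩
  have h1 : (Bᴴ * B * N).trace = (B * N * Bᴴ).trace := (Matrix.trace_mul_cycle B N Bᴴ).symm
  rw [rtr, h1]
  exact (Complex.le_def.mp (psd_trace_nonneg (hN.mul_mul_conjTranspose_same B))).1

lemma rtr_sub (X Y : Matrix ι ι ℂ) : rtr (X - Y) = rtr X - rtr Y := by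
  simp [rtr, Complex.sub_re]

lemma rtr_smul (c : ℝ) (X : Matrix ι ι ℂ) : rtr ((c : ℂ) • X) = c * rtr X := by
  simp [rtr, Matrix.trace_smul, smul_eq_mul, Complex.mul_re]

lemma one_sub_psd {ρ : Matrix ι ι ℂ} (hρ : ρ.PosSemidef) (htr : ρ.trace = 1) :
    ((1 : Matrix ι ι ℂ) - ρ).PosSemidef := by
  have hρH := hρ.1
  have hsum : ∑ i, hρH.eigenvalues i = 1 := by
    have := rtr_eq_sum_eigs hρH
    rw [rtr, htr] at this
    simpa using this.symm
  have hle : ∀ i, hρH.eigenvalues i ≤ 1 := by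
    intro i
    rw [← hsum]
    exact Finset.single_le_sum (f := hρH.eigenvalues)
      (fun j _ => hρ.eigenvalues_nonneg j) (Finset.mem_univ i)
  have h1 : (1 : Matrix ι ι ℂ) - ρ
      = cdiag hρH.eigenvectorUnitary (fun i => 1 - hρH.eigenvalues i) := by
    conv_lhs => rw [spectral_cdiag hρH]
    rw [smul_one_sub_cdiag]
    norm_num
  rw [h1]
  exact cdiag_psd _ fun i => by linarith [hle i]


lemma cdiag_one (U : Matrix.unitaryGroup ι ℂ) : cdiag U (fun _ => (1:ℝ)) = 1 := by
  unfold cdiag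
  have h1 : (fun i : ι => ((((fun _ : ι => (1:ℝ)) i) : ℝ) : ℂ)) = fun _ => (1:ℂ) := by
    funext i; norm_num
  rw [h1, Matrix.diagonal_one, Matrix.mul_one, mul_star_self']

/-- For a full-rank state `σ` and `p > 1`, the supremum over all states `ρ`
of `D_p(ρ‖σ)` equals `log ‖σ⁻¹‖_∞`, and it is attained. -/
theorem statement_0 {d : ℕ} (σ : Matrix (Fin d) (Fin d) ℂ)
    (hσ : σ.PosDef) (hσ1 : σ.trace = 1) (p : ℝ) (hp : 1 < p) :
    IsGreatest {x : ℝ | ∃ ρ : Matrix (Fin d) (Fin d) ℂ, IsState ρ ∧ x = sandDiv p ρ σ}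
      (Real.log (opNorm σ⁻¹)) := by
  classical
  have hσH : σ.IsHermitian := hσ.1
  set U := hσH.eigenvectorUnitary with hU
  set e : Fin d → ℝ := hσH.eigenvalues with he
  have hepos : ∀ i, 0 < e i := fun i => hσ.eigenvalues_pos i
  have hp0 : (0:ℝ) < p := by linarith
  have hp1 : (0:ℝ) < p - 1 := by linarith
  have hpne : p - 1 ≠ 0 := ne_of_gt hp1
  have hd : Nonempty (Fin d) := by
    by_contra hcon
    rw [not_nonempty_iff] at hcon
    have h0 : σ.trace = 0 := by
      rw [Matrix.trace]
      simp
    rw [hσ1] at h0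
    exact one_ne_zero h0
  obtain ⟨i₀, -, hmin'⟩ := Finset.exists_min_image Finset.univ e ⟨hd.some, Finset.mem_univ _⟩
  have hmin : ∀ i, e i₀ ≤ e i := fun i => hmin' i (Finset.mem_univ i)
  set lam := e i₀ with hlam
  have hlpos : 0 < lam := hepos i₀
  have hsum : ∑ i, e i = 1 := by
    have h := rtr_eq_sum_eigs hσH
    rw [rtr, hσ1] at h
    simpa using h.symm
  have hl1 : lam ≤ 1 := by
    rw [← hsum]
    exact Finset.single_le_sum (fun j _ => (hepos j).le) (Finset.mem_univ i₀)
  -- σ⁻¹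
  have hinv_eq : σ⁻¹ = cdiag U (fun i => (e i)⁻¹) := by
    apply Matrix.inv_eq_right_inv
    conv_lhs => rw [spectral_cdiag hσH]
    rw [cdiag_mul]
    rw [show (e * fun i => (e i)⁻¹) = fun _ => (1:ℝ) from
      funext fun i => mul_inv_cancel₀ (hepos i).ne']
    exact cdiag_one U
  have hinvH : (σ⁻¹).IsHermitian := by rw [hinv_eq]; exact cdiag_isHermitian U _
  have hrange : Set.range hinvH.eigenvalues = Set.range (fun i => (e i)⁻¹) :=
    eigs_range_of_eq hinvH U _ hinv_eq
  have hop : opNorm σ⁻¹ = lam⁻¹ := by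
    rw [opNorm, dif_pos hinvH]
    have hpos : ∀ i, 0 < hinvH.eigenvalues i := by
      intro i
      have hmem : hinvH.eigenvalues i ∈ Set.range (fun i => (e i)⁻¹) :=
        hrange ▸ Set.mem_range_self i
      obtain ⟨k, hk⟩ := hmem
      rw [← hk]
      exact inv_pos.mpr (hepos k)
    have habs : (fun i => |hinvH.eigenvalues i|) = hinvH.eigenvalues :=
      funext fun i => abs_of_pos (hpos i)
    show sSup (Set.range fun i => |hinvH.eigenvalues i|) = lam⁻¹
    rw [habs, hrange]
    apply IsGreatest.csSup_eq
    constructor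
    · exact ⟨i₀, rfl⟩
    · rintro x ⟨i, rfl⟩
      exact inv_anti₀ hlpos (hmin i)
  rw [hop]
  -- common notation
  set c' : ℝ := (1 - p)/(2*p) with hc'
  set f : Fin d → ℝ := fun i => e i ^ c' with hf
  have hBeq : mpow σ c' = cdiag U f := mpow_eq hσH c'
  have hB : (mpow σ c').IsHermitian := by rw [hBeq]; exact cdiag_isHermitian U f
  set c : ℝ := lam ^ ((1-p)/p) with hc
  have hcpos : 0 < c := Real.rpow_pos_of_pos hlpos _
  have hcc : c' + c' = (1-p)/p := by rw [hc']; field_simp; ring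
  have hexp : (1-p)/p ≤ 0 := div_nonpos_of_nonpos_of_nonneg (by linarith) hp0.le
  have hff : ∀ i, f i * f i = e i ^ ((1-p)/p) := by
    intro i
    rw [hf]
    dsimp only
    rw [← Real.rpow_add (hepos i), hcc]
  have hffle : ∀ i, f i * f i ≤ c := by
    intro i
    rw [hff i, hc]
    exact Real.rpow_le_rpow_of_nonpos hlpos (hmin i) hexp
  have hBBc : ((c:ℂ) • (1 : Matrix (Fin d) (Fin d) ℂ) - mpow σ c' * mpow σ c').PosSemidef := by
    rw [hBeq, cdiag_mul, ← smul_one_sub_cdiag]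
    refine cdiag_psd U fun i => ?_
    have h1 := hffle i
    simp only [Pi.mul_apply] at h1 ⊢
    linarith
  have hcp : c ^ p = lam ^ (1 - p) := by
    rw [hc, ← Real.rpow_mul hlpos.le]
    congr 1
    field_simp
  have hlogc : Real.log (lam ^ (1-p)) = (1-p) * Real.log lam := Real.log_rpow hlpos _
  have hloglam : Real.log lam ≤ 0 := Real.log_nonpos hlpos.le hl1
  -- the upper bound
  have hub : ∀ ρ : Matrix (Fin d) (Fin d) ℂ, IsState ρ → sandDiv p ρ σ ≤ Real.log lam⁻¹ := by
    rintro ρ ⟨hρ, hρtr⟩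
    have hApsd : (mpow σ c' * ρ * mpow σ c').PosSemidef := by
      have h := hρ.conjTranspose_mul_mul_same (mpow σ c')
      rwa [hB.eq] at h
    have hA : (mpow σ c' * ρ * mpow σ c').IsHermitian := hApsd.1
    have h2 : ((1 : Matrix (Fin d) (Fin d) ℂ) - ρ).PosSemidef := one_sub_psd hρ hρtr
    have h3 := h2.conjTranspose_mul_mul_same (mpow σ c')
    rw [hB.eq] at h3
    have h4 : mpow σ c' * (1 - ρ) * mpow σ c'
        = mpow σ c' * mpow σ c' - mpow σ c' * ρ * mpow σ c' := by
      rw [Matrix.mul_sub, Matrix.sub_mul, Matrix.mul_one]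
    rw [h4] at h3
    have h5 : ((c:ℂ) • (1 : Matrix (Fin d) (Fin d) ℂ) - mpow σ c' * ρ * mpow σ c').PosSemidef := by
      have h6 := hBBc.add h3
      rwa [sub_add_sub_cancel] at h6
    have heig_le : ∀ i, hA.eigenvalues i ≤ c := eig_le_of_psd hA h5
    have heig_nonneg : ∀ i, 0 ≤ hA.eigenvalues i := hApsd.eigenvalues_nonneg
    have htrA : rtr (mpow σ c' * ρ * mpow σ c') ≤ c := by
      have h6 : (mpow σ c' * ρ * mpow σ c').trace = (mpow σ c' * mpow σ c' * ρ).trace :=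
        Matrix.trace_mul_cycle (mpow σ c') ρ (mpow σ c')
      have h7 : 0 ≤ rtr (((c:ℂ) • (1 : Matrix (Fin d) (Fin d) ℂ) - mpow σ c' * mpow σ c') * ρ) :=
        rtr_mul_psd_nonneg hBBc hρ
      rw [Matrix.sub_mul, Matrix.smul_mul, Matrix.one_mul, rtr_sub, rtr_smul] at h7
      have h8 : rtr ρ = 1 := by rw [rtr, hρtr]; simp
      rw [h8, mul_one] at h7
      have h9 : rtr (mpow σ c' * ρ * mpow σ c') = rtr (mpow σ c' * mpow σ c' * ρ) := by
        rw [rtr, rtr, h6]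
      linarith
    have hsumA : ∑ i, hA.eigenvalues i = rtr (mpow σ c' * ρ * mpow σ c') :=
      (rtr_eq_sum_eigs hA).symm
    have hSle : ∑ i, hA.eigenvalues i ^ p ≤ c ^ p := by
      have hstep : ∀ i, hA.eigenvalues i ^ p ≤ c ^ (p-1) * hA.eigenvalues i := by
        intro i
        rcases eq_or_lt_of_le (heig_nonneg i) with h0 | h0
        · rw [← h0, Real.zero_rpow (ne_of_gt hp0)]
          simp
        · have h10 := Real.rpow_add h0 (p-1) 1
          rw [show p - 1 + 1 = p by ring, Real.rpow_one] at h10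
          rw [h10]
          exact mul_le_mul_of_nonneg_right
            (Real.rpow_le_rpow (heig_nonneg i) (heig_le i) (by linarith)) (heig_nonneg i)
      calc ∑ i, hA.eigenvalues i ^ p ≤ ∑ i, c ^ (p-1) * hA.eigenvalues i :=
            Finset.sum_le_sum fun i _ => hstep i
        _ = c ^ (p-1) * ∑ i, hA.eigenvalues i := by rw [Finset.mul_sum]
        _ ≤ c ^ (p-1) * c :=
            mul_le_mul_of_nonneg_left (hsumA ▸ htrA) (Real.rpow_nonneg hcpos.le _)
        _ = c ^ p := by
            nth_rewrite 2 [show c = c ^ (1:ℝ) from (Real.rpow_one c).symm]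
            rw [← Real.rpow_add hcpos, show p - 1 + 1 = p by ring]
    have hSnn : 0 ≤ ∑ i, hA.eigenvalues i ^ p :=
      Finset.sum_nonneg fun i _ => Real.rpow_nonneg (heig_nonneg i) _
    have hlog : Real.log (∑ i, hA.eigenvalues i ^ p) ≤ (1-p) * Real.log lam := by
      rcases eq_or_lt_of_le hSnn with h0 | h0
      · rw [← h0, Real.log_zero]
        have := mul_nonneg (neg_nonneg.mpr (show (1:ℝ)-p ≤ 0 by linarith))
          (neg_nonneg.mpr hloglam)
        nlinarith [this]
      · rw [← hlogc]
        exact Real.log_le_log h0 (le_trans hSle (le_of_eq hcp))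
    simp only [sandDiv]
    rw [← hc', rtr_mpow hA p, Real.log_inv]
    calc (1/(p-1)) * Real.log (∑ i, hA.eigenvalues i ^ p)
        ≤ (1/(p-1)) * ((1-p) * Real.log lam) :=
          mul_le_mul_of_nonneg_left hlog (by positivity)
      _ = - Real.log lam := by field_simp; ring
  constructor
  · -- attainment
    set g : Fin d → ℝ := fun j => if j = i₀ then (1:ℝ) else 0 with hg
    have hρ₀psd : (cdiag U g).PosSemidef := by
      refine cdiag_psd U fun j => ?_
      rw [hg]
      dsimp only
      split <;> norm_num
    have hρ₀tr : (cdiag U g).trace = 1 := by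
      rw [cdiag_trace, hg]
      simp [apply_ite Complex.ofReal, Finset.sum_ite_eq']
    refine ⟨cdiag U g, ⟨hρ₀psd, hρ₀tr⟩, ?_⟩
    set h : Fin d → ℝ := fun j => if j = i₀ then c else 0 with hh
    have hA0eq : mpow σ c' * cdiag U g * mpow σ c' = cdiag U h := by
      rw [hBeq, cdiag_mul, cdiag_mul]
      have hfgf : f * g * f = h := by
        funext j
        simp only [Pi.mul_apply]
        rw [hg, hh]
        dsimp only
        by_cases hj : j = i₀
        · subst hj
          rw [if_pos rfl, if_pos rfl, mul_one, hff j, hc]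
        · rw [if_neg hj, if_neg hj, mul_zero, zero_mul]
      rw [hfgf]
    have hA0 : (mpow σ c' * cdiag U g * mpow σ c').IsHermitian := by
      rw [hA0eq]; exact cdiag_isHermitian U h
    have hA0range := eigs_range_of_eq hA0 U h hA0eq
    have hmem : ∀ j, hA0.eigenvalues j = 0 ∨ hA0.eigenvalues j = c := by
      intro j
      have hmem2 : hA0.eigenvalues j ∈ Set.range h := hA0range ▸ Set.mem_range_self j
      obtain ⟨k, hk⟩ := hmem2
      rw [hh] at hk
      dsimp only at hk
      by_cases hki : k = i₀
      · rw [if_pos hki] at hk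
        exact Or.inr hk.symm
      · rw [if_neg hki] at hk
        exact Or.inl hk.symm
    have hsum0 : ∑ j, hA0.eigenvalues j = c := by
      rw [← rtr_eq_sum_eigs hA0, hA0eq, rtr_cdiag, hh]
      simp [Finset.sum_ite_eq']
    have hS0 : ∑ j, hA0.eigenvalues j ^ p = c ^ p := by
      have hterm : ∀ j, hA0.eigenvalues j ^ p = (hA0.eigenvalues j / c) * c ^ p := by
        intro j
        rcases hmem j with h0 | h0
        · rw [h0, Real.zero_rpow (ne_of_gt hp0), zero_div, zero_mul]
        · rw [h0, div_self (ne_of_gt hcpos), one_mul]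
      rw [Finset.sum_congr rfl fun j _ => hterm j, ← Finset.sum_mul, ← Finset.sum_div, hsum0,
        div_self (ne_of_gt hcpos), one_mul]
    simp only [sandDiv]
    rw [← hc', rtr_mpow hA0 p, hS0, hcp, hlogc, Real.log_inv]
    field_simp
    ring
  · rintro x ⟨ρ, hρ, rfl⟩
    exact hub ρ hρ


end SRC
end
end

section
/- Let d ≥ 2 and let L : M_d → M_d be the Liouvillian L(ρ) = tr(ρ)·(1/d)·𝟙_d − ρ depolarizing to the maximally mixed state. Then for every p ≥ 2: (p/(2(p−1)))·(1/log d) ≥ β_p(L) ≥ (p/(2(p−1)))·(d^{(p−1)/p} − 1)/(d^{(p−1)/p}·log d). -/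
open scoped BigOperators Matrix ComplexOrder

noncomputable section

namespace SRC

variable {ι : Type*} [Fintype ι] [DecidableEq ι]

set_option linter.unusedSectionVars false

lemma rpow_sub_one_mul {x : ℝ} (hx : 0 < x) (p : ℝ) : x ^ (p-1) * x = x ^ p := by
  have h := Real.rpow_add_one hx.ne' (p-1)
  rw [sub_add_cancel] at h
  exact h.symm

lemma rpow_mul_self {x : ℝ} (hx : 0 < x) (a b : ℝ) (h : a + 1 = b) : x ^ a * x = x ^ b := by
  have h2 := Real.rpow_add hx a 1
  rw [Real.rpow_one] at h2
  rw [← h2, h]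

lemma pm_le {d : ℕ} (hd : 0 < d) (μ : Fin d → ℝ) (hμ : ∀ i, 0 < μ i) {p : ℝ} (hp : 1 ≤ p) :
    ((∑ i, μ i)/d) ^ p ≤ (∑ i, μ i ^ p)/d := by
  have hd' : (0:ℝ) < (d:ℝ) := by exact_mod_cast hd
  have := Real.rpow_arith_mean_le_arith_mean_rpow Finset.univ (fun _ : Fin d => (d:ℝ)⁻¹) μ
    (fun i _ => by positivity) (by simp [Finset.sum_const, Finset.card_univ]; field_simp)
    (fun i _ => (hμ i).le) hp
  calc ((∑ i, μ i)/d) ^ p = (∑ i, (d:ℝ)⁻¹ * μ i) ^ p := by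
        rw [← Finset.mul_sum, inv_mul_eq_div]
    _ ≤ ∑ i, (d:ℝ)⁻¹ * μ i ^ p := this
    _ = (∑ i, μ i ^ p)/d := by rw [← Finset.mul_sum, inv_mul_eq_div]

/-- Tp ≤ d^(p-1) T1^p -/
lemma pm_ge {d : ℕ} (hd : 0 < d) (μ : Fin d → ℝ) (hμ : ∀ i, 0 < μ i) {p : ℝ} (hp : 1 ≤ p) :
    (∑ i, μ i ^ p)/d ≤ (d:ℝ) ^ (p-1) * ((∑ i, μ i)/d) ^ p := by
  have hd' : (0:ℝ) < (d:ℝ) := by exact_mod_cast hd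
  have hS : 0 < ∑ i, μ i := Finset.sum_pos (fun i _ => hμ i) ⟨⟨0, hd⟩, Finset.mem_univ _⟩
  have hbound : ∀ i, μ i ^ p ≤ (∑ j, μ j) ^ (p-1) * μ i := by
    intro i
    have hle : μ i ≤ ∑ j, μ j :=
      Finset.single_le_sum (fun j _ => (hμ j).le) (Finset.mem_univ i)
    calc μ i ^ p = μ i ^ (p-1) * μ i := (rpow_sub_one_mul (hμ i) p).symm
      _ ≤ (∑ j, μ j) ^ (p-1) * μ i :=
          mul_le_mul_of_nonneg_right (Real.rpow_le_rpow (hμ i).le hle (by linarith)) (hμ i).le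
  have hsum : (∑ i, μ i ^ p) ≤ (∑ j, μ j) ^ (p-1) * ∑ i, μ i := by
    rw [Finset.mul_sum]
    exact Finset.sum_le_sum fun i _ => hbound i
  have hdp : ((d:ℝ) ^ p) ≠ 0 := (Real.rpow_pos_of_pos hd' p).ne'
  have hrhs : (d:ℝ) ^ (p-1) * ((∑ i, μ i)/d) ^ p = (∑ j, μ j) ^ p / d := by
    rw [Real.div_rpow hS.le hd'.le, show (d:ℝ)^(p-1) = (d:ℝ)^p / d by
      rw [Real.rpow_sub hd', Real.rpow_one]]
    field_simp
  rw [hrhs, rpow_sub_one_mul hS p] at *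
  calc (∑ i, μ i ^ p)/d ≤ ((∑ j, μ j) ^ p)/d := by gcongr
    _ = (∑ j, μ j) ^ p / d := rfl

/-- Lyapunov interpolation: T(p-1) ≤ T1^(1/(p-1)) * Tp^((p-2)/(p-1)) -/
lemma lyapunov {d : ℕ} (hd : 0 < d) (μ : Fin d → ℝ) (hμ : ∀ i, 0 < μ i) {p : ℝ} (hp : 2 ≤ p) :
    (∑ i, μ i ^ (p-1))/d
      ≤ ((∑ i, μ i)/d) ^ (p-1)⁻¹ * ((∑ i, μ i ^ p)/d) ^ ((p-2)/(p-1)) := by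
  have hd' : (0:ℝ) < (d:ℝ) := by exact_mod_cast hd
  have hw : (0:ℝ) < (d:ℝ)⁻¹ := inv_pos.2 hd'
  rcases eq_or_lt_of_le hp with hp2 | hp2
  · -- p = 2
    subst hp2
    have h1 : ((2:ℝ)-1) = 1 := by norm_num
    have h2 : ((2:ℝ)-2) = 0 := by norm_num
    rw [h1, h2, zero_div, Real.rpow_zero, inv_one, Real.rpow_one, mul_one]
    apply le_of_eq
    congr 1
    exact Finset.sum_congr rfl fun i _ => Real.rpow_one _
  · -- p > 2
    set w : ℝ := (d:ℝ)⁻¹ with hwdef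
    set e : ℝ := (p-1)⁻¹ with he
    have hp1 : (0:ℝ) < p - 1 := by linarith
    have hp2' : (0:ℝ) < p - 2 := by linarith
    have he0 : 0 < e := inv_pos.2 hp1
    have hpq : (p-1).HolderConjugate ((p-1)/(p-2)) := by
      exact (Real.holderConjugate_iff_eq_conjExponent (by linarith)).2 (by congr 1; ring)
    set u : Fin d → ℝ := fun i => w * μ i with hu
    set v : Fin d → ℝ := fun i => w ^ (p-2) * μ i ^ (p*(p-2)) with hv
    have hu0 : ∀ i, 0 < u i := fun i => mul_pos hw (hμ i)
    have hv0 : ∀ i, 0 < v i := fun i =>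
      mul_pos (Real.rpow_pos_of_pos hw _) (Real.rpow_pos_of_pos (hμ i) _)
    have key := Real.inner_le_Lp_mul_Lq_of_nonneg (s := Finset.univ) hpq
      (f := fun i => u i ^ e) (g := fun i => v i ^ e)
      (fun i _ => (Real.rpow_pos_of_pos (hu0 i) e).le)
      (fun i _ => (Real.rpow_pos_of_pos (hv0 i) e).le)
    -- rewrite the three sums
    have hfg : ∀ i, u i ^ e * v i ^ e = w * μ i ^ (p-1) := by
      intro i
      rw [← Real.mul_rpow (hu0 i).le (hv0 i).le]
      have huv : u i * v i = w ^ (p-1) * μ i ^ ((p-1)*(p-1)) := by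
        rw [hu, hv]
        rw [show w * μ i * (w ^ (p-2) * μ i ^ (p*(p-2)))
          = (w ^ (p-2) * w) * (μ i ^ (p*(p-2)) * μ i) by ring,
          rpow_mul_self hw (p-2) (p-1) (by ring),
          rpow_mul_self (hμ i) (p*(p-2)) ((p-1)*(p-1)) (by ring)]
      rw [huv, Real.mul_rpow (Real.rpow_pos_of_pos hw _).le
        (Real.rpow_pos_of_pos (hμ i) _).le, ← Real.rpow_mul hw.le, ← Real.rpow_mul (hμ i).le]
      congr 2
      · rw [he]; field_simp; simp
      · rw [he]; field_simp
    have hfa : ∀ i, (u i ^ e) ^ (p-1) = w * μ i := by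
      intro i
      rw [← Real.rpow_mul (hu0 i).le, he, inv_mul_cancel₀ hp1.ne', Real.rpow_one, hu]
    have hgb : ∀ i, (v i ^ e) ^ ((p-1)/(p-2)) = w * μ i ^ p := by
      intro i
      rw [← Real.rpow_mul (hv0 i).le, he, show (p-1)⁻¹ * ((p-1)/(p-2)) = (p-2)⁻¹ by
        field_simp, hv, Real.mul_rpow (Real.rpow_pos_of_pos hw _).le
        (Real.rpow_pos_of_pos (hμ i) _).le, ← Real.rpow_mul hw.le, ← Real.rpow_mul (hμ i).le,
        mul_inv_cancel₀ hp2'.ne', Real.rpow_one]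
      congr 2
      field_simp
    rw [Finset.sum_congr rfl fun i _ => hfg i, Finset.sum_congr rfl fun i _ => hfa i,
      Finset.sum_congr rfl fun i _ => hgb i, ← Finset.mul_sum, ← Finset.mul_sum,
      ← Finset.mul_sum] at key
    calc (∑ i, μ i ^ (p-1))/d = w * ∑ i, μ i ^ (p-1) := by rw [hwdef, inv_mul_eq_div]
      _ ≤ (w * ∑ i, μ i) ^ ((1:ℝ)/(p-1)) * (w * ∑ i, μ i ^ p) ^ ((1:ℝ)/((p-1)/(p-2))) := key
      _ = ((∑ i, μ i)/d) ^ (p-1)⁻¹ * ((∑ i, μ i ^ p)/d) ^ ((p-2)/(p-1)) := by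
          rw [hwdef, inv_mul_eq_div, inv_mul_eq_div, one_div, one_div, inv_div]

lemma exp_segment {s S : ℝ} (h0 : 0 ≤ s) (hS : s ≤ S) (hS0 : 0 < S) :
    Real.exp (-s) ≤ 1 - (1 - Real.exp (-S)) * (s / S) := by
  have hb : 0 ≤ s / S := div_nonneg h0 hS0.le
  have ha : 0 ≤ 1 - s / S := by
    rw [sub_nonneg, div_le_one hS0]
    exact hS
  have hab : (1 - s / S) + s / S = 1 := by ring
  have hconv := convexOn_exp.2 (Set.mem_univ (0:ℝ)) (Set.mem_univ (-S)) ha hb hab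
  have harg : (1 - s / S) • (0:ℝ) + (s / S) • (-S) = -s := by
    rw [smul_eq_mul, smul_eq_mul]
    field_simp
    ring
  rw [harg] at hconv
  calc Real.exp (-s) ≤ (1 - s/S) • Real.exp 0 + (s/S) • Real.exp (-S) := hconv
    _ = 1 - (1 - Real.exp (-S)) * (s / S) := by
        rw [smul_eq_mul, smul_eq_mul, Real.exp_zero]
        ring

theorem scalar_lower {d : ℕ} (hd : 2 ≤ d) {p : ℝ} (hp : 2 ≤ p) (μ : Fin d → ℝ)
    (hμ : ∀ i, 0 < μ i) :
    (p/(2*(p-1))) * (((d:ℝ) ^ ((p-1)/p) - 1) / ((d:ℝ) ^ ((p-1)/p) * Real.log d)) *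
      ((1/(p-1)) * ((∑ i, μ i ^ p)/d) * Real.log (((∑ i, μ i ^ p)/d) / ((∑ i, μ i)/d) ^ p))
    ≤ (p/(2*(p-1))) * ((∑ i, μ i ^ p)/d - ((∑ i, μ i)/d) * ((∑ i, μ i ^ (p-1))/d)) := by
  have hd0 : 0 < d := by omega
  have hd' : (0:ℝ) < (d:ℝ) := by exact_mod_cast hd0
  have hd1 : (1:ℝ) < (d:ℝ) := by exact_mod_cast hd
  have hlog : 0 < Real.log d := Real.log_pos hd1
  have hp0 : (0:ℝ) < p := by linarith
  have hp1 : (0:ℝ) < p - 1 := by linarith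
  have hc : (0:ℝ) < p/(2*(p-1)) := by positivity
  set A : ℝ := (∑ i, μ i)/d with hA
  set B : ℝ := (∑ i, μ i ^ p)/d with hB
  set C : ℝ := (∑ i, μ i ^ (p-1))/d with hC
  have hSA : 0 < ∑ i, μ i := Finset.sum_pos (fun i _ => hμ i) ⟨⟨0, hd0⟩, Finset.mem_univ _⟩
  have hA0 : 0 < A := div_pos hSA hd'
  have hB0 : 0 < B := div_pos
    (Finset.sum_pos (fun i _ => Real.rpow_pos_of_pos (hμ i) p) ⟨⟨0, hd0⟩, Finset.mem_univ _⟩) hd'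
  have hC0 : 0 < C := div_pos
    (Finset.sum_pos (fun i _ => Real.rpow_pos_of_pos (hμ i) (p-1)) ⟨⟨0, hd0⟩, Finset.mem_univ _⟩) hd'
  have hAp0 : 0 < A ^ p := Real.rpow_pos_of_pos hA0 p
  have hApB : A ^ p ≤ B := pm_le hd0 μ hμ (by linarith)
  have hBle : B ≤ (d:ℝ) ^ (p-1) * A ^ p := pm_ge hd0 μ hμ (by linarith)
  set t : ℝ := Real.log (B / A ^ p) with ht
  have ht0 : 0 ≤ t := Real.log_nonneg ((one_le_div hAp0).2 hApB)
  have htle : t ≤ (p-1) * Real.log d := by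
    have h1 : B / A ^ p ≤ (d:ℝ) ^ (p-1) := (div_le_iff₀ hAp0).2 hBle
    calc t ≤ Real.log ((d:ℝ) ^ (p-1)) :=
          Real.log_le_log (div_pos hB0 hAp0) h1
      _ = (p-1) * Real.log d := Real.log_rpow hd' _
  set s : ℝ := t * (p-1)⁻¹ with hs
  have hs0 : 0 ≤ s := mul_nonneg ht0 (by positivity)
  have hsle : s ≤ Real.log d := by
    rw [hs, ← div_eq_mul_inv, div_le_iff₀ hp1]
    linarith [htle]
  -- key1
  have key1 : A * C ≤ B * Real.exp (-s) := by
    have hly := lyapunov hd0 μ hμ hp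
    have hAC : A * C ≤ A * (A ^ (p-1)⁻¹ * B ^ ((p-2)/(p-1))) :=
      mul_le_mul_of_nonneg_left hly hA0.le
    have heq : A * (A ^ (p-1)⁻¹ * B ^ ((p-2)/(p-1))) = B * Real.exp (-s) := by
      have hexp : Real.exp (-s) = (B / A ^ p) ^ (-(p-1)⁻¹) := by
        rw [Real.rpow_def_of_pos (div_pos hB0 hAp0)]
        congr 1
        rw [← ht, hs]
        ring
      have hsplit : (B / A ^ p) ^ (-(p-1)⁻¹) = (A ^ p) ^ (p-1)⁻¹ / B ^ (p-1)⁻¹ := by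
        rw [Real.rpow_neg (div_pos hB0 hAp0).le, Real.div_rpow hB0.le hAp0.le, inv_div]
      rw [hexp, hsplit]
      have hBB : B * ((A ^ p) ^ (p-1)⁻¹ / B ^ (p-1)⁻¹) = (A ^ p) ^ (p-1)⁻¹ * B ^ ((p-2)/(p-1)) := by
        rw [show (p-2)/(p-1) = 1 - (p-1)⁻¹ by field_simp; ring,
          Real.rpow_sub hB0, Real.rpow_one]
        ring
      rw [hBB, ← Real.rpow_mul hA0.le,
        show A * (A ^ (p-1)⁻¹ * B ^ ((p-2)/(p-1))) = (A ^ (p-1)⁻¹ * A) * B ^ ((p-2)/(p-1)) by ring,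
        rpow_mul_self hA0 (p-1)⁻¹ (p * (p-1)⁻¹) (by field_simp; ring)]
    calc A * C ≤ A * (A ^ (p-1)⁻¹ * B ^ ((p-2)/(p-1))) := hAC
      _ = B * Real.exp (-s) := heq
  -- key2
  have key2 : Real.exp (-s) ≤ 1 - (1 - (d:ℝ)⁻¹) * (s / Real.log d) := by
    have h3 : Real.exp (-(Real.log (d:ℝ))) = (d:ℝ)⁻¹ := by
      rw [Real.exp_neg, Real.exp_log hd']
    have h4 := exp_segment hs0 hsle hlog
    rw [h3] at h4
    exact h4
  -- coefficient comparison
  set D : ℝ := (d:ℝ) ^ ((p-1)/p) with hD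
  have hD0 : 0 < D := Real.rpow_pos_of_pos hd' _
  have hDd : D ≤ (d:ℝ) := by
    calc D ≤ (d:ℝ) ^ (1:ℝ) :=
          Real.rpow_le_rpow_of_exponent_le hd1.le (by rw [div_le_one hp0]; linarith)
      _ = (d:ℝ) := Real.rpow_one _
  have hcoeff : (D - 1) / (D * Real.log d) ≤ (1 - (d:ℝ)⁻¹) / Real.log d := by
    rw [div_le_div_iff₀ (by positivity) hlog]
    have h1 : (D - 1) / D ≤ 1 - (d:ℝ)⁻¹ := by
      rw [sub_div, div_self hD0.ne']
      have : (d:ℝ)⁻¹ ≤ D⁻¹ := by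
        apply inv_anti₀ hD0 hDd
      linarith [one_div D ▸ this]
    calc (D - 1) * Real.log d = ((D-1)/D) * (D * Real.log d) := by
          field_simp
          try ring
      _ ≤ (1 - (d:ℝ)⁻¹) * (D * Real.log d) :=
          mul_le_mul_of_nonneg_right h1 (by positivity)
  -- assemble
  have hlhs : (1/(p-1)) * B * t = B * s := by
    rw [hs]
    ring
  rw [hlhs]
  have hBs : (0:ℝ) ≤ B * s := mul_nonneg hB0.le hs0
  calc (p/(2*(p-1))) * ((D - 1) / (D * Real.log d)) * (B * s)
      ≤ (p/(2*(p-1))) * ((1 - (d:ℝ)⁻¹) / Real.log d) * (B * s) := by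
        apply mul_le_mul_of_nonneg_right _ hBs
        exact mul_le_mul_of_nonneg_left hcoeff hc.le
    _ = (p/(2*(p-1))) * (B * ((1 - (d:ℝ)⁻¹) * (s / Real.log d))) := by
        field_simp
    _ ≤ (p/(2*(p-1))) * (B * (1 - Real.exp (-s))) := by
        apply mul_le_mul_of_nonneg_left _ hc.le
        apply mul_le_mul_of_nonneg_left _ hB0.le
        linarith [key2]
    _ = (p/(2*(p-1))) * (B - B * Real.exp (-s)) := by ring
    _ ≤ (p/(2*(p-1))) * (B - A * C) := by
        apply mul_le_mul_of_nonneg_left _ hc.le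
        linarith [key1]

lemma sum_ite_rpow {d : ℕ} (i0 : Fin d) (ε : ℝ) (k : ℝ) :
    (∑ i : Fin d, (if i = i0 then (1:ℝ) else ε) ^ k) = 1 + ((d:ℝ)-1) * ε ^ k := by
  have hd : 0 < d := i0.pos
  have hterm : ∀ i : Fin d, (if i = i0 then (1:ℝ) else ε) ^ k
      = ε ^ k + (if i = i0 then 1 - ε ^ k else 0) := by
    intro i
    by_cases h : i = i0
    · simp [h, Real.one_rpow]
    · simp [h]
  rw [Finset.sum_congr rfl fun i _ => hterm i, Finset.sum_add_distrib,
    Finset.sum_ite_eq' Finset.univ i0 (fun _ => 1 - ε ^ k),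
    if_pos (Finset.mem_univ _), Finset.sum_const, Finset.card_univ, Fintype.card_fin,
    nsmul_eq_mul]
  ring

set_option maxHeartbeats 1000000 in
lemma scalar_upper {d : ℕ} (hd : 2 ≤ d) {p : ℝ} (hp : 2 ≤ p) {β : ℝ} (hβ : 0 ≤ β) {ε : ℝ}
    (hε : ε = (p-1) * Real.log d / (p * d * ((d:ℝ)-1)))
    (h : β * ((1/(p-1)) * ((1+((d:ℝ)-1)*ε ^ p)/d)
          * Real.log (((1+((d:ℝ)-1)*ε ^ p)/d) / ((1+((d:ℝ)-1)*ε)/d) ^ p))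
        ≤ (p/(2*(p-1))) * ((1+((d:ℝ)-1)*ε ^ p)/d
          - ((1+((d:ℝ)-1)*ε)/d) * ((1+((d:ℝ)-1)*ε ^ (p-1))/d))) :
    β ≤ (p/(2*(p-1))) * (1 / Real.log d) := by
  have hd' : (0:ℝ) < (d:ℝ) := by positivity
  have hd1 : (1:ℝ) < (d:ℝ) := by exact_mod_cast hd
  have hd2 : (2:ℝ) ≤ (d:ℝ) := by exact_mod_cast hd
  have hdm1 : (1:ℝ) ≤ (d:ℝ) - 1 := by linarith
  have hlog : 0 < Real.log d := Real.log_pos hd1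
  have hp0 : (0:ℝ) < p := by linarith
  have hp1 : (0:ℝ) < p - 1 := by linarith
  have hε0 : 0 < ε := by
    rw [hε]
    positivity
  have hε1 : ε < 1 := by
    rw [hε]
    rw [div_lt_one (by positivity)]
    have hlt : Real.log d ≤ (d:ℝ) := Real.log_le_self hd'.le
    have h1 : (p-1) * Real.log d < p * Real.log d := by nlinarith
    have h2 : p * Real.log d ≤ p * (d:ℝ) := by nlinarith
    have h3 : p * (d:ℝ) ≤ p * (d:ℝ) * ((d:ℝ)-1) := le_mul_of_one_le_right (by positivity) hdm1
    linarith
  have hεm : ε ^ (p-1) ≤ 1 := Real.rpow_le_one hε0.le hε1.le (by linarith)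
  have hεm0 : 0 < ε ^ (p-1) := Real.rpow_pos_of_pos hε0 _
  have hεp0 : 0 < ε ^ p := Real.rpow_pos_of_pos hε0 _
  have hEp : ε ^ (p-1) * ε = ε ^ p := rpow_sub_one_mul hε0 p
  -- abbreviations
  set Tp : ℝ := (1+((d:ℝ)-1)*ε ^ p)/d with hTp
  set T1 : ℝ := (1+((d:ℝ)-1)*ε)/d with hT1
  set Tm : ℝ := (1+((d:ℝ)-1)*ε ^ (p-1))/d with hTm
  have hTp0 : 0 < Tp := by rw [hTp]; positivity
  have hT10 : 0 < T1 := by rw [hT1]; positivity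
  -- RHS bound
  have hrhs : Tp - T1 * Tm ≤ ((d:ℝ)-1)/(d:ℝ)^2 := by
    have heq : Tp - T1 * Tm = ((d:ℝ)-1)*(1-ε)*(1-ε^(p-1))/(d:ℝ)^2 := by
      rw [hTp, hT1, hTm, ← hEp]
      field_simp
      ring
    have h6a : ε * ε ^ (p-1) ≤ ε := by nlinarith [hεm, hε0]
    have h6 : (1-ε)*(1-ε^(p-1)) ≤ 1 := by nlinarith [h6a, hεm0, hε0]
    have h7 : ((d:ℝ)-1)*((1-ε)*(1-ε^(p-1))) ≤ ((d:ℝ)-1)*1 :=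
      mul_le_mul_of_nonneg_left h6 (by linarith)
    rw [heq]
    rw [div_le_div_iff₀ (by positivity) (by positivity)]
    nlinarith [mul_le_mul_of_nonneg_right h7 (by positivity : (0:ℝ) ≤ (d:ℝ)^2)]
  -- LHS bound
  have hchoice : p * ((d:ℝ)-1) * ε = (p-1) * Real.log d / d := by
    rw [hε]
    field_simp
  have hlogT1 : Real.log T1 ≤ ((d:ℝ)-1)*ε - Real.log d := by
    rw [hT1, Real.log_div (by positivity) hd'.ne']
    have := Real.log_le_sub_one_of_pos (show (0:ℝ) < 1+((d:ℝ)-1)*ε by positivity)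
    linarith
  have hlogTp : -Real.log d ≤ Real.log Tp := by
    have h1 : (1:ℝ)/d ≤ Tp := by
      rw [hTp, div_le_div_iff₀ hd' hd']
      nlinarith [mul_pos (show (0:ℝ) < (d:ℝ)-1 by linarith) hεp0]
    calc -Real.log d = Real.log (1/(d:ℝ)) := by
          rw [one_div, Real.log_inv]
      _ ≤ Real.log Tp := Real.log_le_log (by positivity) h1
  have hlogratio : (p-1) * Real.log d * (((d:ℝ)-1)/d) ≤ Real.log (Tp / T1 ^ p) := by
    rw [Real.log_div hTp0.ne' (by positivity : (0:ℝ) < T1 ^ p).ne', Real.log_rpow hT10]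
    have : (p-1) * Real.log d * (((d:ℝ)-1)/d) = (p-1) * Real.log d - (p-1) * Real.log d / d := by
      field_simp
    rw [this]
    nlinarith [hlogT1, hlogTp, hchoice, hp0]
  have hlogratio0 : 0 ≤ Real.log (Tp / T1 ^ p) := by
    have hfac : 0 ≤ (p-1) * Real.log d * (((d:ℝ)-1)/d) := by positivity
    linarith
  have hlhs : Real.log d * (((d:ℝ)-1)/(d:ℝ)^2)
      ≤ (1/(p-1)) * Tp * Real.log (Tp / T1 ^ p) := by
    have h1 : (1:ℝ)/d ≤ Tp := by
      rw [hTp, div_le_div_iff₀ hd' hd']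
      nlinarith [mul_pos (show (0:ℝ) < (d:ℝ)-1 by linarith) hεp0]
    calc Real.log d * (((d:ℝ)-1)/(d:ℝ)^2)
        = (1/(p-1)) * (1/d) * ((p-1) * Real.log d * (((d:ℝ)-1)/d)) := by
          field_simp
      _ ≤ (1/(p-1)) * Tp * Real.log (Tp / T1 ^ p) := by
          apply mul_le_mul
          · exact mul_le_mul_of_nonneg_left h1 (by positivity)
          · exact hlogratio
          · positivity
          · positivity
  -- combine
  have hfinal : β * (Real.log d * (((d:ℝ)-1)/(d:ℝ)^2))
      ≤ (p/(2*(p-1))) * (((d:ℝ)-1)/(d:ℝ)^2) := by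
    calc β * (Real.log d * (((d:ℝ)-1)/(d:ℝ)^2))
        ≤ β * ((1/(p-1)) * Tp * Real.log (Tp / T1 ^ p)) :=
          mul_le_mul_of_nonneg_left hlhs hβ
      _ ≤ (p/(2*(p-1))) * (Tp - T1 * Tm) := h
      _ ≤ (p/(2*(p-1))) * (((d:ℝ)-1)/(d:ℝ)^2) :=
          mul_le_mul_of_nonneg_left hrhs (by positivity)
  have hpos : (0:ℝ) < ((d:ℝ)-1)/(d:ℝ)^2 := by positivity
  have h9 : β * Real.log d * (((d:ℝ)-1)/(d:ℝ)^2)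
      ≤ (p/(2*(p-1))) * (((d:ℝ)-1)/(d:ℝ)^2) := by
    rw [show β * Real.log d * (((d:ℝ)-1)/(d:ℝ)^2)
      = β * (Real.log d * (((d:ℝ)-1)/(d:ℝ)^2)) by ring]
    exact hfinal
  have h8 : β * Real.log d ≤ p/(2*(p-1)) := le_of_mul_le_mul_right h9 hpos
  rw [mul_one_div]
  exact (le_div_iff₀ hlog).2 h8


/-- conjugated real diagonal -/
def cg (V : Matrix ι ι ℂ) (f : ι → ℝ) : Matrix ι ι ℂ :=
  V * Matrix.diagonal (fun i => ((f i : ℝ) : ℂ)) * Vᴴ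

variable {V : Matrix ι ι ℂ}

variable {V : Matrix ι ι ℂ}

lemma cg_congr {f g : ι → ℝ} (h : ∀ i, f i = g i) : cg V f = cg V g := by
  rw [funext h]

lemma diag_herm (f : ι → ℝ) :
    (Matrix.diagonal (fun i => ((f i : ℝ) : ℂ)))ᴴ = Matrix.diagonal (fun i => ((f i : ℝ) : ℂ)) := by
  rw [Matrix.diagonal_conjTranspose,
    show star (fun i => ((f i : ℝ):ℂ)) = (fun i => ((f i : ℝ):ℂ)) from
      funext fun i => by simp [Pi.star_apply, Complex.star_def, Complex.conj_ofReal]]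

lemma cg_herm (f : ι → ℝ) : (cg V f).IsHermitian := by
  have : (cg V f)ᴴ = cg V f := by
    unfold cg
    simp only [Matrix.conjTranspose_mul, Matrix.conjTranspose_conjTranspose, diag_herm, mul_assoc]
  exact this

lemma cg_mul (hV : Vᴴ * V = 1) (f g : ι → ℝ) :
    cg V f * cg V g = cg V (fun i => f i * g i) := by
  unfold cg
  rw [show V * Matrix.diagonal (fun i => ((f i : ℝ) : ℂ)) * Vᴴ * (V * Matrix.diagonal (fun i => ((g i : ℝ) : ℂ)) * Vᴴ)
    = V * Matrix.diagonal (fun i => ((f i : ℝ) : ℂ)) * (Vᴴ * V) * Matrix.diagonal (fun i => ((g i : ℝ) : ℂ)) * Vᴴ by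
      simp only [mul_assoc]]
  rw [hV, mul_one, mul_assoc V, Matrix.diagonal_mul_diagonal,
    show (fun i => ((f i : ℝ):ℂ) * ((g i : ℝ):ℂ)) = fun i => (((fun i => f i * g i) i : ℝ) : ℂ) from
      funext fun i => by push_cast; ring]

lemma cg_sub (f g : ι → ℝ) : cg V f - cg V g = cg V (fun i => f i - g i) := by
  unfold cg
  rw [← Matrix.sub_mul, ← Matrix.mul_sub, Matrix.diagonal_sub,
    show (fun i => ((f i : ℝ):ℂ) - ((g i : ℝ):ℂ)) = fun i => (((fun i => f i - g i) i : ℝ) : ℂ) from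
      funext fun i => by simp]

lemma cg_smul (a : ℝ) (f : ι → ℝ) : ((a : ℝ) : ℂ) • cg V f = cg V (fun i => a * f i) := by
  unfold cg
  rw [← Matrix.smul_mul, ← Matrix.mul_smul, ← Matrix.diagonal_smul,
    show ((a:ℝ):ℂ) • (fun i => ((f i : ℝ):ℂ)) = fun i => (((fun i => a * f i) i : ℝ) : ℂ) from
      funext fun i => by push_cast [Pi.smul_apply, smul_eq_mul]; ring]

lemma trace_cg (hV : Vᴴ * V = 1) (f : ι → ℝ) :
    (cg V f).trace = ((∑ i, f i : ℝ) : ℂ) := by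
  unfold cg
  rw [Matrix.trace_mul_cycle, hV, one_mul, Matrix.trace_diagonal]
  norm_num

lemma cg_const (hV' : V * Vᴴ = 1) (c : ℝ) : cg V (fun _ => c) = ((c : ℝ) : ℂ) • 1 := by
  unfold cg
  have : Matrix.diagonal (fun _ : ι => ((c : ℝ) : ℂ)) = ((c:ℝ):ℂ) • 1 := by
    ext i j
    by_cases hij : i = j <;> simp [Matrix.diagonal_apply, Matrix.one_apply, hij]
  rw [this, Matrix.mul_smul, Matrix.smul_mul, mul_one, hV']

lemma cg_one (hV' : V * Vᴴ = 1) : cg V (fun _ => (1:ℝ)) = 1 := by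
  rw [cg_const hV']
  norm_num

/-- functional calculus well-definedness -/
lemma funcalc {A : Matrix ι ι ℂ} (hA : A.IsHermitian) (hV : Vᴴ * V = 1) (hV' : V * Vᴴ = 1)
    {μ : ι → ℝ} (hAV : A = cg V μ) (g : ℝ → ℝ) :
    (hA.eigenvectorUnitary : Matrix ι ι ℂ) *
      Matrix.diagonal (fun i => ((g (hA.eigenvalues i) : ℝ) : ℂ)) *
      star (hA.eigenvectorUnitary : Matrix ι ι ℂ) = cg V (fun i => g (μ i)) := by
  set U : Matrix ι ι ℂ := (hA.eigenvectorUnitary : Matrix ι ι ℂ) with hUdef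
  have hU : U ∈ Matrix.unitaryGroup ι ℂ := (Matrix.IsHermitian.eigenvectorUnitary hA).2
  have hU1 : U * Uᴴ = 1 := by
    rw [← Matrix.star_eq_conjTranspose]
    exact (Matrix.mem_unitaryGroup_iff).mp hU
  have hU2 : Uᴴ * U = 1 := by
    rw [← Matrix.star_eq_conjTranspose]
    exact (Matrix.mem_unitaryGroup_iff').mp hU
  have hsp : A = U * Matrix.diagonal (fun i => ((hA.eigenvalues i : ℝ) : ℂ)) * Uᴴ := by
    have := hA.spectral_theorem
    rw [Unitary.conjStarAlgAut_apply] at this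
    rw [← Matrix.star_eq_conjTranspose]
    exact this
  set W : Matrix ι ι ℂ := Uᴴ * V with hW
  have hDW : Matrix.diagonal (fun i => ((hA.eigenvalues i : ℝ) : ℂ)) * W
      = W * Matrix.diagonal (fun i => ((μ i : ℝ) : ℂ)) := by
    have h1 : Uᴴ * A * V = Matrix.diagonal (fun i => ((hA.eigenvalues i : ℝ) : ℂ)) * W := by
      have := congrArg (fun M => Uᴴ * M * V) hsp
      rw [this]
      rw [show Uᴴ * (U * Matrix.diagonal (fun i => ((hA.eigenvalues i : ℝ) : ℂ)) * Uᴴ) * V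
        = (Uᴴ * U) * Matrix.diagonal (fun i => ((hA.eigenvalues i : ℝ) : ℂ)) * (Uᴴ * V) by
          simp only [mul_assoc], hU2, one_mul, hW]
    have h2 : Uᴴ * A * V = W * Matrix.diagonal (fun i => ((μ i : ℝ) : ℂ)) := by
      have := congrArg (fun M => Uᴴ * M * V) hAV
      simp only [cg] at this
      rw [this]
      rw [show Uᴴ * (V * Matrix.diagonal (fun i => ((μ i : ℝ) : ℂ)) * Vᴴ) * V
        = (Uᴴ * V) * Matrix.diagonal (fun i => ((μ i : ℝ) : ℂ)) * (Vᴴ * V) by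
          simp only [mul_assoc], hV, mul_one, hW]
    rw [← h1, h2]
  have hgW : Matrix.diagonal (fun i => ((g (hA.eigenvalues i) : ℝ) : ℂ)) * W
      = W * Matrix.diagonal (fun i => ((g (μ i) : ℝ) : ℂ)) := by
    ext i j
    have hentry : ((hA.eigenvalues i : ℝ) : ℂ) * W i j = W i j * ((μ j : ℝ) : ℂ) := by
      have := congrFun (congrFun hDW i) j
      simpa [Matrix.diagonal_mul, Matrix.mul_diagonal] using this
    by_cases h0 : W i j = 0
    · simp [Matrix.diagonal_mul, Matrix.mul_diagonal, h0]
    · have heq : hA.eigenvalues i = μ j := by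
        have : ((hA.eigenvalues i : ℝ) : ℂ) = ((μ j : ℝ) : ℂ) := by
          have := hentry
          rw [mul_comm (W i j) _] at this
          exact mul_right_cancel₀ h0 this
        exact_mod_cast this
      simp [Matrix.diagonal_mul, Matrix.mul_diagonal, heq, mul_comm]
  calc U * Matrix.diagonal (fun i => ((g (hA.eigenvalues i) : ℝ) : ℂ)) * star U
      = U * (Matrix.diagonal (fun i => ((g (hA.eigenvalues i) : ℝ) : ℂ)) * W) * Vᴴ := by
        rw [hW, Matrix.star_eq_conjTranspose]
        rw [show U * (Matrix.diagonal (fun i => ((g (hA.eigenvalues i) : ℝ) : ℂ)) * (Uᴴ * V)) * Vᴴ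
          = U * Matrix.diagonal (fun i => ((g (hA.eigenvalues i) : ℝ) : ℂ)) * Uᴴ * (V * Vᴴ) by
            simp only [mul_assoc], hV', mul_one]
    _ = U * (W * Matrix.diagonal (fun i => ((g (μ i) : ℝ) : ℂ))) * Vᴴ := by rw [hgW]
    _ = cg V (fun i => g (μ i)) := by
        unfold cg
        rw [hW, show U * (Uᴴ * V * Matrix.diagonal (fun i => ((g (μ i) : ℝ) : ℂ))) * Vᴴ
          = (U * Uᴴ) * (V * Matrix.diagonal (fun i => ((g (μ i) : ℝ) : ℂ)) * Vᴴ) by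
            simp only [mul_assoc], hU1, one_mul]

lemma mpow_cg (hV : Vᴴ * V = 1) (hV' : V * Vᴴ = 1) (f : ι → ℝ) (c : ℝ) :
    mpow (cg V f) c = cg V (fun i => f i ^ c) := by
  rw [mpow, dif_pos (cg_herm f)]
  exact funcalc (cg_herm f) hV hV' rfl (fun x => x ^ c)



section compute
variable {d : ℕ}

local notation "σd" => ((d : ℂ)⁻¹ • (1 : Matrix (Fin d) (Fin d) ℂ))

lemma sigma_eq {V : Matrix (Fin d) (Fin d) ℂ} (hV' : V * Vᴴ = 1) :
    σd = cg V (fun _ => ((d:ℝ))⁻¹) := by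
  rw [cg_const hV']
  norm_num

lemma rtr_cg {V : Matrix (Fin d) (Fin d) ℂ} (hV : Vᴴ * V = 1) (f : Fin d → ℝ) :
    rtr (cg V f) = ∑ i, f i := by
  rw [rtr, trace_cg hV, Complex.ofReal_re]

lemma mpow_sigma {V : Matrix (Fin d) (Fin d) ℂ} (hV : Vᴴ * V = 1) (hV' : V * Vᴴ = 1) (t : ℝ) :
    mpow σd t = cg V (fun _ => ((d:ℝ))⁻¹ ^ t) := by
  rw [sigma_eq hV', mpow_cg hV hV']

lemma rpow_self_mul_self {x : ℝ} (hx : 0 ≤ x) : (x * x) ^ ((1:ℝ)/2) = x := by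
  have h2 : x * x = x ^ (2:ℝ) := by
    rw [show (2:ℝ) = ((2:ℕ):ℝ) by norm_num, Real.rpow_natCast]
    ring
  rw [h2, ← Real.rpow_mul hx]
  norm_num

lemma mabs_cg {V : Matrix (Fin d) (Fin d) ℂ} (hV : Vᴴ * V = 1) (hV' : V * Vᴴ = 1)
    (f : Fin d → ℝ) (hf : ∀ i, 0 ≤ f i) :
    mabs (cg V f) = cg V f := by
  rw [mabs, cg_herm f, cg_mul hV, mpow_cg hV hV']
  exact cg_congr fun i => rpow_self_mul_self (hf i)

lemma wnorm_eq {V : Matrix (Fin d) (Fin d) ℂ} (hd : 0 < d) (hV : Vᴴ * V = 1) (hV' : V * Vᴴ = 1)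
    (μ : Fin d → ℝ) (hμ : ∀ i, 0 < μ i) {p : ℝ} (hp : 0 < p) :
    wnorm σd p (cg V μ) = ((∑ i, μ i ^ p) / d) ^ ((1:ℝ)/p) := by
  have hd' : (0:ℝ) < (d:ℝ) := by exact_mod_cast hd
  have hdr : (0:ℝ) < ((d:ℝ))⁻¹ := inv_pos.2 hd'
  set a : ℝ := ((d:ℝ))⁻¹ ^ ((1:ℝ)/(2*p)) with ha
  have ha0 : 0 < a := Real.rpow_pos_of_pos hdr _
  have hnu : ∀ i, 0 ≤ a * μ i * a := fun i => mul_nonneg (mul_nonneg ha0.le (hμ i).le) ha0.le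
  rw [wnorm, mpow_sigma hV hV', cg_mul hV, cg_mul hV, mabs_cg hV hV' _ hnu,
    mpow_cg hV hV', rtr_cg hV]
  congr 2
  have hsum : ∀ i, (a * μ i * a) ^ p = ((d:ℝ))⁻¹ * μ i ^ p := by
    intro i
    have haa : a * a = ((d:ℝ))⁻¹ ^ ((1:ℝ)/p) := by
      rw [ha, ← Real.rpow_add hdr]
      congr 1
      rw [← add_div, div_eq_div_iff (by positivity : (0:ℝ) < 2*p).ne' hp.ne']
      ring
    have : a * μ i * a = (a * a) * μ i := by ring
    rw [this, haa, Real.mul_rpow (Real.rpow_nonneg hdr.le _) (hμ i).le,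
      ← Real.rpow_mul hdr.le]
    congr 2
    field_simp
    simp [hd'.ne']
  rw [Finset.sum_congr rfl (fun i _ => hsum i), ← Finset.mul_sum]
  field_simp

lemma wnorm_one_eq {V : Matrix (Fin d) (Fin d) ℂ} (hd : 0 < d) (hV : Vᴴ * V = 1)
    (hV' : V * Vᴴ = 1) (μ : Fin d → ℝ) (hμ : ∀ i, 0 < μ i) :
    wnorm σd 1 (cg V μ) = (∑ i, μ i) / d := by
  rw [wnorm_eq hd hV hV' μ hμ one_pos]
  rw [show (∑ i, μ i ^ (1:ℝ)) = ∑ i, μ i from Finset.sum_congr rfl fun i _ => Real.rpow_one _]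
  norm_num

lemma winner_eq {V : Matrix (Fin d) (Fin d) ℂ} (hd : 0 < d) (hV : Vᴴ * V = 1)
    (hV' : V * Vᴴ = 1) (f g : Fin d → ℝ) :
    winner σd (cg V f) (cg V g) = (∑ i, f i * g i) / d := by
  have hd' : (0:ℝ) < (d:ℝ) := by exact_mod_cast hd
  have hdr : (0:ℝ) < ((d:ℝ))⁻¹ := inv_pos.2 hd'
  rw [winner, mpow_sigma hV hV', cg_mul hV, cg_mul hV, cg_mul hV, rtr_cg hV]
  have hh : ((d:ℝ))⁻¹ ^ ((1:ℝ)/2) * ((d:ℝ))⁻¹ ^ ((1:ℝ)/2) = ((d:ℝ))⁻¹ := by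
    rw [← Real.rpow_add hdr]
    norm_num
  have : ∀ i, ((d:ℝ))⁻¹ ^ ((1:ℝ)/2) * f i * ((d:ℝ))⁻¹ ^ ((1:ℝ)/2) * g i
      = ((d:ℝ))⁻¹ * (f i * g i) := fun i => by
    calc ((d:ℝ))⁻¹ ^ ((1:ℝ)/2) * f i * ((d:ℝ))⁻¹ ^ ((1:ℝ)/2) * g i
        = (((d:ℝ))⁻¹ ^ ((1:ℝ)/2) * ((d:ℝ))⁻¹ ^ ((1:ℝ)/2)) * (f i * g i) := by ring
      _ = ((d:ℝ))⁻¹ * (f i * g i) := by rw [hh]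
  rw [Finset.sum_congr rfl (fun i _ => this i), ← Finset.mul_sum]
  field_simp

lemma Ipow_eq {V : Matrix (Fin d) (Fin d) ℂ} (hd : 0 < d) (hV : Vᴴ * V = 1)
    (hV' : V * Vᴴ = 1) (μ : Fin d → ℝ) (hμ : ∀ i, 0 < μ i) {p : ℝ} (hp : 2 ≤ p) :
    Ipow σd (p/(p-1)) p (cg V μ) = cg V (fun i => μ i ^ (p-1)) := by
  have hd' : (0:ℝ) < (d:ℝ) := by exact_mod_cast hd
  have hdr : (0:ℝ) < ((d:ℝ))⁻¹ := inv_pos.2 hd'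
  have hp0 : (0:ℝ) < p := by linarith
  have hp1 : p - 1 ≠ 0 := by intro h; nlinarith
  have hpr : p / (p / (p - 1)) = p - 1 := by
    rw [div_div_eq_mul_div, mul_div_assoc]
    field_simp
  set a : ℝ := ((d:ℝ))⁻¹ ^ ((1:ℝ)/(2*p)) with ha
  have ha0 : 0 < a := Real.rpow_pos_of_pos hdr _
  rw [Ipow, mpow_sigma hV hV', mpow_sigma hV hV', cg_mul hV, cg_mul hV, mpow_cg hV hV',
    cg_mul hV, cg_mul hV]
  refine cg_congr fun i => ?_
  set b : ℝ := ((d:ℝ))⁻¹ ^ (-((1:ℝ)/(2*(p/(p-1))))) with hb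
  have key : (a * μ i * a) ^ (p / (p/(p-1))) = ((d:ℝ))⁻¹ ^ ((p-1)/p) * μ i ^ (p-1) := by
    have haa : a * a = ((d:ℝ))⁻¹ ^ ((1:ℝ)/p) := by
      rw [ha, ← Real.rpow_add hdr]
      congr 1
      rw [← add_div, div_eq_div_iff (by positivity : (0:ℝ) < 2*p).ne' hp0.ne']
      ring
    rw [show a * μ i * a = (a * a) * μ i by ring, haa, hpr,
      Real.mul_rpow (Real.rpow_nonneg hdr.le _) (hμ i).le, ← Real.rpow_mul hdr.le]
    congr 2
    field_simp
  rw [key, hb]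
  have hbb : ((d:ℝ))⁻¹ ^ (-((1:ℝ)/(2*(p/(p-1))))) * (((d:ℝ))⁻¹ ^ ((p-1)/p) * μ i ^ (p-1))
      * ((d:ℝ))⁻¹ ^ (-((1:ℝ)/(2*(p/(p-1))))) =
      (((d:ℝ))⁻¹ ^ (-((1:ℝ)/(2*(p/(p-1))))) * ((d:ℝ))⁻¹ ^ (-((1:ℝ)/(2*(p/(p-1)))))
        * ((d:ℝ))⁻¹ ^ ((p-1)/p)) * μ i ^ (p-1) := by ring
  rw [hbb, ← Real.rpow_add hdr, ← Real.rpow_add hdr,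
    show -(1/(2*(p/(p-1)))) + -(1/(2*(p/(p-1)))) + (p-1)/p = 0 by field_simp; ring,
    Real.rpow_zero, one_mul]

lemma conjLin_apply (A X : Matrix ι ι ℂ) : conjLin A X = A * X * A := rfl
lemma depol_apply (σ ρ : Matrix ι ι ℂ) : depol σ ρ = ρ.trace • σ - ρ := rfl

lemma hatMap_eq {V : Matrix (Fin d) (Fin d) ℂ} (hd : 0 < d) (hV : Vᴴ * V = 1)
    (hV' : V * Vᴴ = 1) (μ : Fin d → ℝ) :
    hatMap σd (depol σd) (cg V μ) = cg V (fun i => (∑ j, μ j)/d - μ i) := by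
  have hd' : (0:ℝ) < (d:ℝ) := by exact_mod_cast hd
  have hdr : (0:ℝ) < ((d:ℝ))⁻¹ := inv_pos.2 hd'
  rw [hatMap, LinearMap.comp_apply, LinearMap.comp_apply, conjLin_apply, conjLin_apply,
    mpow_sigma hV hV', mpow_sigma hV hV', cg_mul hV, cg_mul hV, depol_apply, trace_cg hV,
    sigma_eq hV', cg_smul, cg_sub, cg_mul hV, cg_mul hV]
  refine cg_congr fun i => ?_
  set h : ℝ := ((d:ℝ))⁻¹ ^ ((1:ℝ)/2) with hh
  set h' : ℝ := ((d:ℝ))⁻¹ ^ (-((1:ℝ)/2)) with hh'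
  have hhh : h * h' = 1 := by
    rw [hh, hh', ← Real.rpow_add hdr]
    norm_num
  have hS : (∑ j, h * μ j * h) = (h * h) * ∑ j, μ j := by
    rw [Finset.mul_sum]
    exact Finset.sum_congr rfl fun j _ => by ring
  calc h' * ((∑ j, h * μ j * h) * ((d:ℝ))⁻¹ - h * μ i * h) * h'
      = h' * (((h*h) * ∑ j, μ j) * ((d:ℝ))⁻¹ - h * μ i * h) * h' := by rw [hS]
    _ = (h*h') * (h*h') * ((∑ j, μ j) * ((d:ℝ))⁻¹ - μ i) := by ring
    _ = (∑ j, μ j) * ((d:ℝ))⁻¹ - μ i := by rw [hhh]; ring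
    _ = (∑ j, μ j)/d - μ i := by rw [div_eq_mul_inv]

lemma dirichlet_eq {V : Matrix (Fin d) (Fin d) ℂ} (hd : 0 < d) (hV : Vᴴ * V = 1)
    (hV' : V * Vᴴ = 1) (μ : Fin d → ℝ) (hμ : ∀ i, 0 < μ i) {p : ℝ} (hp : 2 ≤ p) :
    dirichlet σd (depol σd) p (cg V μ)
      = (p/(2*(p-1))) * ((∑ i, μ i ^ p)/d - ((∑ i, μ i)/d) * ((∑ i, μ i ^ (p-1))/d)) := by
  have hd' : (0:ℝ) < (d:ℝ) := by exact_mod_cast hd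
  rw [dirichlet, Ipow_eq hd hV hV' μ hμ hp, hatMap_eq hd hV hV' μ, winner_eq hd hV hV']
  have hterm : ∀ i, μ i ^ (p-1) * ((∑ j, μ j)/d - μ i)
      = ((∑ j, μ j)/d) * μ i ^ (p-1) - μ i ^ p := by
    intro i
    have hxp : μ i ^ (p-1) * μ i = μ i ^ p := by
      calc μ i ^ (p-1) * μ i = μ i ^ (p-1) * μ i ^ (1:ℝ) := by rw [Real.rpow_one]
        _ = μ i ^ ((p-1) + 1) := (Real.rpow_add (hμ i) _ _).symm
        _ = μ i ^ p := by norm_num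
    rw [mul_sub, hxp]
    ring
  rw [Finset.sum_congr rfl fun i _ => hterm i, Finset.sum_sub_distrib, ← Finset.mul_sum]
  ring

lemma kappa_eq {V : Matrix (Fin d) (Fin d) ℂ} (hd : 0 < d) (hV : Vᴴ * V = 1)
    (hV' : V * Vᴴ = 1) (μ : Fin d → ℝ) (hμ : ∀ i, 0 < μ i) {p : ℝ} (hp : 2 ≤ p) :
    kappa σd p (cg V μ)
      = (1/(p-1)) * ((∑ i, μ i ^ p)/d)
        * Real.log (((∑ i, μ i ^ p)/d) / ((∑ i, μ i)/d) ^ p) := by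
  have hd' : (0:ℝ) < (d:ℝ) := by exact_mod_cast hd
  have hp0 : (0:ℝ) < p := by linarith
  have hT0 : (0:ℝ) ≤ (∑ i, μ i ^ p)/d :=
    div_nonneg (Finset.sum_nonneg fun i _ => (Real.rpow_pos_of_pos (hμ i) p).le) hd'.le
  rw [kappa, wnorm_eq hd hV hV' μ hμ hp0, wnorm_one_eq hd hV hV' μ hμ,
    ← Real.rpow_mul hT0, one_div_mul_cancel hp0.ne', Real.rpow_one]

end compute

section assembly
variable {d : ℕ}

lemma cg_one_diag (f : Fin d → ℝ) :
    cg (1 : Matrix (Fin d) (Fin d) ℂ) f = Matrix.diagonal (fun i => ((f i : ℝ) : ℂ)) := by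
  simp [cg, Matrix.conjTranspose_one]

lemma posdef_repr {X : Matrix (Fin d) (Fin d) ℂ} (hX : X.PosDef) :
    X = cg (hX.1.eigenvectorUnitary : Matrix (Fin d) (Fin d) ℂ) hX.1.eigenvalues := by
  have h := hX.1.spectral_theorem
  rw [Unitary.conjStarAlgAut_apply] at h
  rw [cg, ← Matrix.star_eq_conjTranspose]
  exact h

/-- every element of the betaP set is at most c/log d -/
lemma beta_mem_le (hd : 2 ≤ d) {p : ℝ} (hp : 2 ≤ p) {β : ℝ} (hβ : 0 ≤ β)
    (hall : ∀ X : Matrix (Fin d) (Fin d) ℂ, X.PosDef →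
      β * kappa ((d : ℂ)⁻¹ • 1) p X ≤
        dirichlet ((d : ℂ)⁻¹ • 1) (depol ((d : ℂ)⁻¹ • 1)) p X) :
    β ≤ (p/(2*(p-1))) * (1 / Real.log d) := by
  have hd0 : 0 < d := by omega
  have hd' : (0:ℝ) < (d:ℝ) := by exact_mod_cast hd0
  have hd1 : (1:ℝ) < (d:ℝ) := by exact_mod_cast hd
  have hp1 : (0:ℝ) < p - 1 := by linarith
  have hlog : 0 < Real.log d := Real.log_pos hd1
  set ε : ℝ := (p-1) * Real.log d / (p * d * ((d:ℝ)-1)) with hεdef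
  have hε0 : 0 < ε := by
    rw [hεdef]
    have : (0:ℝ) < (d:ℝ) - 1 := by linarith
    positivity
  set i0 : Fin d := ⟨0, hd0⟩ with hi0
  set μ : Fin d → ℝ := fun i => if i = i0 then 1 else ε with hμdef
  have hμ : ∀ i, 0 < μ i := fun i => by
    rw [hμdef]
    by_cases h : i = i0 <;> simp [h, hε0]
  have hXpd : (Matrix.diagonal (fun i => ((μ i : ℝ):ℂ))).PosDef := by
    rw [Matrix.posDef_diagonal_iff]
    intro i
    exact_mod_cast hμ i
  have hXcg : Matrix.diagonal (fun i => ((μ i : ℝ):ℂ)) = cg 1 μ := (cg_one_diag μ).symm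
  have hkey := hall _ hXpd
  rw [hXcg, kappa_eq hd0 (by simp) (by simp) μ hμ hp,
    dirichlet_eq hd0 (by simp) (by simp) μ hμ hp] at hkey
  have hsp : (∑ i, μ i ^ p) = 1 + ((d:ℝ)-1) * ε ^ p := sum_ite_rpow i0 ε p
  have hsm : (∑ i, μ i ^ (p-1)) = 1 + ((d:ℝ)-1) * ε ^ (p-1) := sum_ite_rpow i0 ε (p-1)
  have hs1 : (∑ i, μ i) = 1 + ((d:ℝ)-1) * ε := by
    have h1 := sum_ite_rpow i0 ε 1
    rw [Real.rpow_one] at h1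
    rw [← h1]
    exact Finset.sum_congr rfl fun i _ => (Real.rpow_one _).symm
  rw [hsp, hsm, hs1] at hkey
  exact scalar_upper hd hp hβ hεdef hkey


/-- Bounds on `β_p` for the Liouvillian depolarizing to the
maximally mixed state. -/
theorem statement_4 {d : ℕ} (hd : 2 ≤ d) (p : ℝ) (hp : 2 ≤ p) :
    betaP ((d : ℂ)⁻¹ • (1 : Matrix (Fin d) (Fin d) ℂ))
        (depol ((d : ℂ)⁻¹ • (1 : Matrix (Fin d) (Fin d) ℂ))) p ≤
      (p/(2*(p-1))) * (1 / Real.log d) ∧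
    (p/(2*(p-1))) * (((d:ℝ) ^ ((p-1)/p) - 1) / ((d:ℝ) ^ ((p-1)/p) * Real.log d)) ≤
      betaP ((d : ℂ)⁻¹ • (1 : Matrix (Fin d) (Fin d) ℂ))
        (depol ((d : ℂ)⁻¹ • (1 : Matrix (Fin d) (Fin d) ℂ))) p := by
  have hd0 : 0 < d := by omega
  have hd' : (0:ℝ) < (d:ℝ) := by exact_mod_cast hd0
  have hd1 : (1:ℝ) < (d:ℝ) := by exact_mod_cast hd
  have hp1 : (0:ℝ) < p - 1 := by linarith
  have hp0 : (0:ℝ) < p := by linarith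
  have hlog : 0 < Real.log d := Real.log_pos hd1
  set S := {β : ℝ | 0 ≤ β ∧ ∀ X : Matrix (Fin d) (Fin d) ℂ, X.PosDef →
    β * kappa ((d : ℂ)⁻¹ • 1) p X ≤
      dirichlet ((d : ℂ)⁻¹ • 1) (depol ((d : ℂ)⁻¹ • 1)) p X} with hS
  have hmem_le : ∀ β ∈ S, β ≤ (p/(2*(p-1))) * (1 / Real.log d) := by
    intro β hβ
    exact beta_mem_le hd hp hβ.1 hβ.2
  constructor
  · exact Real.sSup_le hmem_le
      (mul_nonneg (div_nonneg hp0.le (by linarith)) (by positivity))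
  · -- lower bound: membership
    set β₀ : ℝ := (p/(2*(p-1))) * (((d:ℝ) ^ ((p-1)/p) - 1) / ((d:ℝ) ^ ((p-1)/p) * Real.log d))
      with hβ₀
    have hD1 : (1:ℝ) ≤ (d:ℝ) ^ ((p-1)/p) := by
      have h := Real.rpow_le_rpow_of_exponent_le hd1.le
        (show (0:ℝ) ≤ (p-1)/p from div_nonneg (by linarith) hp0.le)
      rwa [Real.rpow_zero] at h
    have hD0 : (0:ℝ) < (d:ℝ) ^ ((p-1)/p) := Real.rpow_pos_of_pos hd' _
    have hβ₀0 : 0 ≤ β₀ := by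
      rw [hβ₀]
      have h1 : (0:ℝ) ≤ (d:ℝ) ^ ((p-1)/p) - 1 := by linarith
      exact mul_nonneg (div_nonneg hp0.le (by linarith))
        (div_nonneg h1 (by positivity))
    have hmem : β₀ ∈ S := by
      refine ⟨hβ₀0, fun X hX => ?_⟩
      have hH := hX.1
      set U : Matrix (Fin d) (Fin d) ℂ := (hH.eigenvectorUnitary : Matrix (Fin d) (Fin d) ℂ)
        with hU
      have hUm : U ∈ Matrix.unitaryGroup (Fin d) ℂ := hH.eigenvectorUnitary.2
      have hU1 : U * Uᴴ = 1 := by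
        rw [← Matrix.star_eq_conjTranspose]
        exact (Matrix.mem_unitaryGroup_iff).mp hUm
      have hU2 : Uᴴ * U = 1 := by
        rw [← Matrix.star_eq_conjTranspose]
        exact (Matrix.mem_unitaryGroup_iff').mp hUm
      have hXr : X = cg U hH.eigenvalues := posdef_repr hX
      have hμpos : ∀ i, 0 < hH.eigenvalues i := hX.eigenvalues_pos
      rw [hXr, kappa_eq hd0 hU2 hU1 _ hμpos hp, dirichlet_eq hd0 hU2 hU1 _ hμpos hp]
      exact scalar_lower hd hp _ hμpos
    have hbdd : BddAbove S := ⟨(p/(2*(p-1))) * (1 / Real.log d), fun β hβ => hmem_le β hβ⟩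
    exact le_csSup hbdd hmem


end assembly
end SRC
end
end

section
/- For n ≥ 1 let T_n : M_2^{⊗n} → M_2^{⊗n} be the random Pauli error channel T_n = (1/n)·Σ_{i=1}^n id^{⊗(i−1)} ⊗ T ⊗ id^{⊗(n−i)}, where T : M_2 → M_2 is the completely depolarizing channel T(ρ) = tr(ρ)·𝟙_2/2. Then for every state ρ on M_2^{⊗n}, D_2(T_n(ρ)‖𝟙_{2^n}/2^n) ≤ (1 − 1/(2n²))·D_2(ρ‖𝟙_{2^n}/2^n). -/
open scoped BigOperators Matrix ComplexOrder

noncomputable section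

namespace SRC

variable {ι : Type*} [Fintype ι] [DecidableEq ι]

/-- The completely depolarizing qubit channel `T(ρ) = tr(ρ)·𝟙₂/2`. -/
def fullyDepolQubit : Matrix (Fin 2) (Fin 2) ℂ →ₗ[ℂ] Matrix (Fin 2) (Fin 2) ℂ where
  toFun ρ := ρ.trace • ((2 : ℂ)⁻¹ • (1 : Matrix (Fin 2) (Fin 2) ℂ))
  map_add' ρ₁ ρ₂ := by simp [Matrix.trace_add, add_smul]
  map_smul' c ρ := by simp [Matrix.trace_smul, smul_smul, mul_assoc]

/-! ### Auxiliary lemmas -/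

set_option linter.unusedSectionVars false

section MpowLemmas

lemma SRC_unitary_mul_star {A : Matrix ι ι ℂ} (hA : A.IsHermitian) :
    (hA.eigenvectorUnitary : Matrix ι ι ℂ) * star (hA.eigenvectorUnitary : Matrix ι ι ℂ) = 1 :=
  Matrix.mem_unitaryGroup_iff.mp hA.eigenvectorUnitary.2

lemma SRC_star_mul_unitary {A : Matrix ι ι ℂ} (hA : A.IsHermitian) :
    star (hA.eigenvectorUnitary : Matrix ι ι ℂ) * (hA.eigenvectorUnitary : Matrix ι ι ℂ) = 1 :=
  Matrix.mem_unitaryGroup_iff'.mp hA.eigenvectorUnitary.2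

lemma SRC_conj_mul {U B C : Matrix ι ι ℂ} (hU : star U * U = 1) :
    (U * B * star U) * (U * C * star U) = U * (B * C) * star U := by
  simp only [Matrix.mul_assoc]
  rw [← Matrix.mul_assoc (star U) U (C * star U), hU, Matrix.one_mul]

lemma smul_one_isHermitian (a : ℝ) : ((a : ℂ) • (1 : Matrix ι ι ℂ)).IsHermitian := by
  unfold Matrix.IsHermitian
  rw [Matrix.conjTranspose_smul, Matrix.conjTranspose_one]
  congr 1
  simp

lemma eigenvalues_smul_one (a : ℝ) (hA : ((a : ℂ) • (1 : Matrix ι ι ℂ)).IsHermitian) (i : ι) :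
    hA.eigenvalues i = a := by
  have h := hA.spectral_theorem
  rw [Unitary.conjStarAlgAut_apply] at h
  have h2 : Matrix.diagonal (RCLike.ofReal ∘ hA.eigenvalues) = (a : ℂ) • (1 : Matrix ι ι ℂ) := by
    have h7 : star (hA.eigenvectorUnitary : Matrix ι ι ℂ) *
        ((hA.eigenvectorUnitary : Matrix ι ι ℂ) *
          Matrix.diagonal (RCLike.ofReal ∘ hA.eigenvalues) *
          star (hA.eigenvectorUnitary : Matrix ι ι ℂ)) *
        (hA.eigenvectorUnitary : Matrix ι ι ℂ) =
        Matrix.diagonal (RCLike.ofReal ∘ hA.eigenvalues) := by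
      simp only [← Matrix.mul_assoc]
      rw [SRC_star_mul_unitary hA, Matrix.one_mul, Matrix.mul_assoc,
        SRC_star_mul_unitary hA, Matrix.mul_one]
    rw [← h] at h7
    rw [← h7, Matrix.mul_smul, Matrix.smul_mul, mul_one, SRC_star_mul_unitary hA]
  have h3 := congrFun (congrFun h2 i) i
  simp only [Matrix.diagonal_apply_eq, Function.comp_apply, Matrix.smul_apply,
    Matrix.one_apply_eq, smul_eq_mul, mul_one] at h3
  exact_mod_cast RCLike.ofReal_inj.mp h3

lemma mpow_smul_one (a : ℝ) (c : ℝ) :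
    mpow ((a : ℂ) • (1 : Matrix ι ι ℂ)) c = (((a ^ c : ℝ)) : ℂ) • (1 : Matrix ι ι ℂ) := by
  have hA := smul_one_isHermitian (ι := ι) a
  rw [mpow, dif_pos hA]
  have h1 : (fun i => ((hA.eigenvalues i ^ c : ℝ) : ℂ)) = fun _ : ι => ((a ^ c : ℝ) : ℂ) := by
    funext i; rw [eigenvalues_smul_one a hA i]
  rw [h1]
  have hd : Matrix.diagonal (fun _ : ι => ((a ^ c : ℝ) : ℂ)) =
      ((a ^ c : ℝ) : ℂ) • (1 : Matrix ι ι ℂ) := by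
    ext i j
    by_cases hij : i = j <;> simp [Matrix.diagonal_apply, Matrix.one_apply, hij]
  rw [hd, Matrix.mul_smul, Matrix.smul_mul, mul_one, SRC_unitary_mul_star hA]

lemma mpow_two {A : Matrix ι ι ℂ} (hA : A.IsHermitian) : mpow A 2 = A * A := by
  rw [mpow, dif_pos hA]
  have key : ∀ lam : ℝ, ((lam ^ (2:ℝ) : ℝ) : ℂ) = (lam : ℂ) * (lam : ℂ) := by
    intro lam
    rw [show (2:ℝ) = ((2:ℕ):ℝ) by norm_num, Real.rpow_natCast]
    push_cast; ring
  have hd : Matrix.diagonal (fun i => ((hA.eigenvalues i ^ (2:ℝ) : ℝ) : ℂ)) =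
      Matrix.diagonal (RCLike.ofReal ∘ hA.eigenvalues) *
        Matrix.diagonal (RCLike.ofReal ∘ hA.eigenvalues) := by
    rw [Matrix.diagonal_mul_diagonal]
    exact congrArg Matrix.diagonal (funext fun i => key (hA.eigenvalues i))
  rw [hd]
  conv_rhs => rw [hA.spectral_theorem, Unitary.conjStarAlgAut_apply]
  rw [SRC_conj_mul (SRC_star_mul_unitary hA)]

lemma real_smul_isHermitian {A : Matrix ι ι ℂ} (hA : A.IsHermitian) (r : ℝ) :
    ((r : ℂ) • A).IsHermitian := by
  unfold Matrix.IsHermitian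
  rw [Matrix.conjTranspose_smul, hA.eq]
  congr 1
  simp

lemma rtr_real_smul (r : ℝ) (A : Matrix ι ι ℂ) : rtr ((r : ℂ) • A) = r * rtr A := by
  rw [rtr, Matrix.trace_smul, smul_eq_mul, Complex.re_ofReal_mul, rtr]

lemma sandDiv_two_smul_one {a : ℝ} (ha : 0 < a) {ρ : Matrix ι ι ℂ} (hρ : ρ.IsHermitian) :
    sandDiv 2 ρ ((a : ℂ) • (1 : Matrix ι ι ℂ)) = Real.log (a⁻¹ * rtr (ρ * ρ)) := by
  have he : ((1:ℝ) - 2)/(2*2) = -(1/4 : ℝ) := by norm_num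
  set k : ℝ := a ^ (-(1/4) : ℝ) with hk
  have hmul : mpow ((a:ℂ) • (1 : Matrix ι ι ℂ)) ((1-2)/(2*2)) * ρ *
      mpow ((a:ℂ) • (1 : Matrix ι ι ℂ)) ((1-2)/(2*2)) = ((k * k : ℝ) : ℂ) • ρ := by
    rw [he, mpow_smul_one, ← hk]
    rw [smul_mul_assoc, one_mul, mul_smul_comm, mul_one, smul_smul]
    norm_cast
  rw [sandDiv, hmul, mpow_two (real_smul_isHermitian hρ _)]
  have h3 : (((k * k : ℝ) : ℂ) • ρ) * (((k * k : ℝ) : ℂ) • ρ) =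
      (((k * k) * (k * k) : ℝ) : ℂ) • (ρ * ρ) := by
    rw [smul_mul_assoc, mul_smul_comm, smul_smul]
    norm_cast
  have h4 : (k * k) * (k * k) = a⁻¹ := by
    have h5 : a ^ (-(1/4):ℝ) * a ^ (-(1/4):ℝ) = a ^ (-(1/2):ℝ) := by
      rw [← Real.rpow_add ha]; norm_num
    have h6 : a ^ (-(1/2):ℝ) * a ^ (-(1/2):ℝ) = a⁻¹ := by
      rw [← Real.rpow_add ha, show (-(1/2) + -(1/2):ℝ) = -1 by norm_num,
        Real.rpow_neg ha.le, Real.rpow_one]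
    rw [hk, h5, h6]
  rw [h3, rtr_real_smul, h4]
  norm_num

end MpowLemmas

section Pauli

/-- The four Pauli matrices. -/
def pauli : Fin 4 → Matrix (Fin 2) (Fin 2) ℂ :=
  ![!![1,0;0,1], !![0,1;1,0], !![0, -Complex.I; Complex.I, 0], !![1,0;0,-1]]

lemma pauli_zero_apply (a b : Fin 2) : pauli 0 a b = if a = b then 1 else 0 := by
  fin_cases a <;> fin_cases b <;> simp [pauli]

lemma pauli_trace (k : Fin 4) : ∑ a, pauli k a a = if k = 0 then 2 else 0 := by
  fin_cases k <;> simp [pauli, Fin.sum_univ_two] <;> norm_num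

lemma pauli_orth (k l : Fin 4) :
    ∑ a : Fin 2, ∑ b : Fin 2, (starRingEnd ℂ) (pauli k a b) * pauli l a b
      = if k = l then 2 else 0 := by
  fin_cases k <;> fin_cases l <;>
    simp [pauli, Fin.sum_univ_two, Complex.conj_I, Complex.I_mul_I] <;> ring_nf <;>
    simp [Complex.I_sq] <;> norm_num

lemma pauli_complete (a b a' b' : Fin 2) :
    ∑ k : Fin 4, (starRingEnd ℂ) (pauli k a b) * pauli k a' b'
      = if a = a' ∧ b = b' then 2 else 0 := by
  fin_cases a <;> fin_cases b <;> fin_cases a' <;> fin_cases b' <;>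
    simp [pauli, Fin.sum_univ_four, Complex.conj_I, Complex.I_mul_I] <;> ring_nf <;>
    simp [Complex.I_sq] <;> norm_num

/-- Pauli strings. -/
def PS {n : ℕ} (s : Fin n → Fin 4) : Matrix (Fin n → Fin 2) (Fin n → Fin 2) ℂ :=
  Matrix.of fun x y => ∏ i, pauli (s i) (x i) (y i)

lemma PS_apply {n : ℕ} (s : Fin n → Fin 4) (x y : Fin n → Fin 2) :
    PS s x y = ∏ i, pauli (s i) (x i) (y i) := rfl

lemma PS_zero_apply {n : ℕ} (x y : Fin n → Fin 2) :
    PS (fun _ => (0 : Fin 4)) x y = if x = y then 1 else 0 := by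
  rw [PS_apply]
  simp only [pauli_zero_apply]
  by_cases h : x = y
  · subst h; simp
  · obtain ⟨i, hi⟩ := Function.ne_iff.mp h
    rw [if_neg h]
    exact Finset.prod_eq_zero (Finset.mem_univ i) (by simp [hi])

lemma sum_fun_prod {n : ℕ} {β : Type*} [Fintype β] [DecidableEq β] (g : Fin n → β → ℂ) :
    ∑ x : Fin n → β, ∏ i, g i (x i) = ∏ i, ∑ b, g i b := by
  rw [Finset.prod_univ_sum, Fintype.piFinset_univ]

lemma trace_conjTranspose_mul {m : Type*} [Fintype m] (A B : Matrix m m ℂ) :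
    Matrix.trace (Aᴴ * B) = ∑ x, ∑ y, (starRingEnd ℂ) (A y x) * B y x := by
  simp [Matrix.trace, Matrix.mul_apply, Matrix.conjTranspose_apply, Matrix.diag]

lemma PS_orth {n : ℕ} (s t : Fin n → Fin 4) :
    Matrix.trace ((PS s)ᴴ * PS t) = if s = t then (2:ℂ)^n else 0 := by
  rw [trace_conjTranspose_mul]
  have key : ∀ y x : Fin n → Fin 2, (starRingEnd ℂ) (PS s y x) * PS t y x
      = ∏ i, ((starRingEnd ℂ) (pauli (s i) (y i) (x i)) * pauli (t i) (y i) (x i)) := by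
    intro y x; rw [PS_apply, PS_apply, map_prod, ← Finset.prod_mul_distrib]
  simp_rw [key]
  rw [Finset.sum_comm]
  have step1 : ∀ y : Fin n → Fin 2, ∑ x : Fin n → Fin 2,
      ∏ i, ((starRingEnd ℂ) (pauli (s i) (y i) (x i)) * pauli (t i) (y i) (x i))
      = ∏ i, ∑ b, ((starRingEnd ℂ) (pauli (s i) (y i) b) * pauli (t i) (y i) b) := by
    intro y; exact sum_fun_prod (fun i b => (starRingEnd ℂ) (pauli (s i) (y i) b) * pauli (t i) (y i) b)
  simp_rw [step1]
  rw [sum_fun_prod (fun (i : Fin n) (a : Fin 2) =>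
    ∑ b, (starRingEnd ℂ) (pauli (s i) a b) * pauli (t i) a b)]
  simp_rw [pauli_orth]
  by_cases h : s = t
  · subst h; simp
  · rw [if_neg h]
    obtain ⟨i, hi⟩ := Function.ne_iff.mp h
    exact Finset.prod_eq_zero (Finset.mem_univ i) (by simp [hi])

lemma PS_complete {n : ℕ} (x y x' y' : Fin n → Fin 2) :
    ∑ s : Fin n → Fin 4, (starRingEnd ℂ) (PS s x y) * PS s x' y'
      = if x = x' ∧ y = y' then (2:ℂ)^n else 0 := by
  have key : ∀ s : Fin n → Fin 4, (starRingEnd ℂ) (PS s x y) * PS s x' y'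
      = ∏ i, ((starRingEnd ℂ) (pauli (s i) (x i) (y i)) * pauli (s i) (x' i) (y' i)) := by
    intro s; rw [PS_apply, PS_apply, map_prod, ← Finset.prod_mul_distrib]
  simp_rw [key]
  rw [sum_fun_prod (fun (i : Fin n) (k : Fin 4) =>
    (starRingEnd ℂ) (pauli k (x i) (y i)) * pauli k (x' i) (y' i))]
  simp_rw [pauli_complete]
  by_cases h : x = x' ∧ y = y'
  · obtain ⟨h1, h2⟩ := h; subst h1; subst h2; simp
  · rw [if_neg h]
    have h2 : ¬ ∀ i, (x i = x' i ∧ y i = y' i) := by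
      intro hall
      exact h ⟨funext fun i => (hall i).1, funext fun i => (hall i).2⟩
    obtain ⟨i, hi⟩ := not_forall.mp h2
    exact Finset.prod_eq_zero (Finset.mem_univ i) (if_neg hi)

/-- Pauli coefficients. -/
def coef {n : ℕ} (s : Fin n → Fin 4) (M : Matrix (Fin n → Fin 2) (Fin n → Fin 2) ℂ) : ℂ :=
  ∑ x, ∑ y, (starRingEnd ℂ) (PS s x y) * M x y

lemma coef_expansion {n : ℕ} (M : Matrix (Fin n → Fin 2) (Fin n → Fin 2) ℂ) :
    M = ((2:ℂ)^n)⁻¹ • ∑ s, coef s M • PS s := by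
  ext x y
  rw [Matrix.smul_apply, Matrix.sum_apply]
  simp_rw [Matrix.smul_apply, smul_eq_mul]
  have key : ∑ s, coef s M * PS s x y = (2:ℂ)^n * M x y := by
    simp_rw [coef, Finset.sum_mul]
    rw [Finset.sum_comm]
    have step : ∀ x' : Fin n → Fin 2, ∑ s : Fin n → Fin 4,
        ∑ y' : Fin n → Fin 2, (starRingEnd ℂ) (PS s x' y') * M x' y' * PS s x y
        = ∑ y' : Fin n → Fin 2, ∑ s : Fin n → Fin 4,
          (starRingEnd ℂ) (PS s x' y') * M x' y' * PS s x y := fun x' => by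
      rw [Finset.sum_comm]
    simp_rw [step]
    simp_rw [show ∀ (u v w : ℂ), u * v * w = v * (u * w) from fun u v w => by ring,
      ← Finset.mul_sum, PS_complete]
    simp_rw [mul_ite, mul_zero, ite_and]
    have inner : ∀ x' : Fin n → Fin 2, (∑ y' : Fin n → Fin 2,
        if x' = x then if y' = y then M x' y' * (2:ℂ)^n else 0 else 0)
        = if x' = x then M x' y * (2:ℂ)^n else 0 := by
      intro x'
      by_cases h : x' = x <;> simp [h, Finset.sum_ite_eq']
    simp_rw [inner, Finset.sum_ite_eq' Finset.univ x (fun x' => M x' y * (2:ℂ)^n),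
      Finset.mem_univ, if_true]
    ring
  rw [key, ← mul_assoc, inv_mul_cancel₀ (by positivity), one_mul]

end Pauli

section Layer3

lemma trace_sq_expansion {n : ℕ} (f : (Fin n → Fin 4) → ℂ) :
    Matrix.trace ((∑ s, f s • PS s)ᴴ * (∑ t, f t • PS t))
      = (2:ℂ)^n * ∑ s, star (f s) * f s := by
  rw [Matrix.conjTranspose_sum]
  simp_rw [Matrix.conjTranspose_smul, Finset.sum_mul, Finset.mul_sum, Matrix.trace_sum,
    smul_mul_assoc, mul_smul_comm, smul_smul, Matrix.trace_smul, PS_orth, smul_eq_mul,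
    mul_ite, mul_zero]
  apply Finset.sum_congr rfl
  intro s _
  rw [Finset.sum_ite_eq Finset.univ s (fun t => star (f s) * f t * (2:ℂ)^n),
    if_pos (Finset.mem_univ s)]
  ring

lemma rtr_sq_expansion {n : ℕ} {M : Matrix (Fin n → Fin 2) (Fin n → Fin 2) ℂ}
    (hM : M.IsHermitian) (f : (Fin n → Fin 4) → ℂ) (hf : M = ∑ s, f s • PS s) :
    rtr (M * M) = (2:ℝ)^n * ∑ s, Complex.normSq (f s) := by
  have h1 : M * M = Mᴴ * M := by rw [hM.eq]
  rw [rtr, h1, hf, trace_sq_expansion]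
  have h2 : ∑ s, star (f s) * f s = ((∑ s, Complex.normSq (f s) : ℝ) : ℂ) := by
    push_cast
    apply Finset.sum_congr rfl
    intro s _
    rw [Complex.normSq_eq_conj_mul_self, Complex.star_def]
  rw [h2, show ((2:ℂ)^n) = (((2:ℝ)^n : ℝ) : ℂ) by push_cast; ring, ← Complex.ofReal_mul,
    Complex.ofReal_re]

lemma coef_zero_eq_trace {n : ℕ} (M : Matrix (Fin n → Fin 2) (Fin n → Fin 2) ℂ) :
    coef (fun _ => (0 : Fin 4)) M = M.trace := by
  rw [coef]
  simp_rw [PS_zero_apply, apply_ite (starRingEnd ℂ), map_one, map_zero, ite_mul, one_mul,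
    zero_mul]
  rw [Matrix.trace]
  apply Finset.sum_congr rfl
  intro x _
  rw [Finset.sum_ite_eq Finset.univ x (fun y => M x y), if_pos (Finset.mem_univ x)]
  rfl

lemma local_PS {n : ℕ} (i : Fin n) (s : Fin n → Fin 4) :
    localApply n fullyDepolQubit i (PS s) = if s i = 0 then PS s else 0 := by
  ext x y
  have hup : ∀ (a b : Fin 2), PS s (Function.update x i a) (Function.update y i b)
      = pauli (s i) a b * ∏ j ∈ Finset.univ.erase i, pauli (s j) (x j) (y j) := by
    intro a b
    rw [PS_apply, ← Finset.mul_prod_erase Finset.univ _ (Finset.mem_univ i)]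
    congr 1
    · rw [Function.update_self, Function.update_self]
    · apply Finset.prod_congr rfl
      intro j hj
      rw [Function.update_of_ne (Finset.ne_of_mem_erase hj),
        Function.update_of_ne (Finset.ne_of_mem_erase hj)]
  have hLHS : localApply n fullyDepolQubit i (PS s) x y
      = (Matrix.of fun a b => PS s (Function.update x i a) (Function.update y i b)).trace *
        ((2:ℂ)⁻¹ * (1 : Matrix (Fin 2) (Fin 2) ℂ) (x i) (y i)) := rfl
  have htr : (Matrix.of fun a b => PS s (Function.update x i a) (Function.update y i b)).trace
      = (if s i = 0 then 2 else 0) * ∏ j ∈ Finset.univ.erase i, pauli (s j) (x j) (y j) := by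
    rw [Matrix.trace]
    simp only [Matrix.diag_apply, Matrix.of_apply]
    simp_rw [hup]
    rw [← Finset.sum_mul, pauli_trace]
  rw [hLHS, htr]
  by_cases h : s i = 0
  · rw [if_pos h, if_pos h, PS_apply, ← Finset.mul_prod_erase Finset.univ _ (Finset.mem_univ i),
      h, pauli_zero_apply, ← Matrix.one_apply (i := x i) (j := y i)]
    ring
  · rw [if_neg h, if_neg h]
    simp

lemma local_herm {n : ℕ} (i : Fin n) {M : Matrix (Fin n → Fin 2) (Fin n → Fin 2) ℂ}
    (hM : M.IsHermitian) : (localApply n fullyDepolQubit i M).IsHermitian := by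
  rw [Matrix.IsHermitian]
  ext x y
  rw [Matrix.conjTranspose_apply]
  have hLHS : ∀ u v : Fin n → Fin 2, localApply n fullyDepolQubit i M u v
      = (Matrix.of fun a b => M (Function.update u i a) (Function.update v i b)).trace *
        ((2:ℂ)⁻¹ * (1 : Matrix (Fin 2) (Fin 2) ℂ) (u i) (v i)) := fun _ _ => rfl
  have h1 : star ((2:ℂ)⁻¹) = (2:ℂ)⁻¹ := by simp
  have h2 : star ((1 : Matrix (Fin 2) (Fin 2) ℂ) (y i) (x i))
      = (1 : Matrix (Fin 2) (Fin 2) ℂ) (x i) (y i) := by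
    simp only [Matrix.one_apply]
    by_cases h : y i = x i
    · rw [if_pos h, if_pos h.symm]; simp
    · rw [if_neg h, if_neg (fun hq => h hq.symm)]; simp
  have h3 : star (Matrix.of fun a b =>
        M (Function.update y i a) (Function.update x i b)).trace
      = (Matrix.of fun a b => M (Function.update x i a) (Function.update y i b)).trace := by
    rw [← starRingEnd_apply]
    unfold Matrix.trace
    rw [map_sum]
    apply Finset.sum_congr rfl
    intro a _
    simp only [Matrix.diag_apply, Matrix.of_apply]
    rw [starRingEnd_apply, hM.apply]
  rw [hLHS, hLHS, star_mul', star_mul', h1, h2, h3]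

end Layer3

section Layer4

lemma trace_eq_sum_eigenvalues {A : Matrix ι ι ℂ} (hA : A.IsHermitian) :
    A.trace = ∑ i, ((hA.eigenvalues i : ℝ) : ℂ) := by
  conv_lhs => rw [hA.spectral_theorem, Unitary.conjStarAlgAut_apply]
  rw [Matrix.trace_mul_cycle, SRC_star_mul_unitary hA, Matrix.one_mul, Matrix.trace_diagonal]
  rfl

lemma trace_sq_eq_sum_eigenvalues_sq {A : Matrix ι ι ℂ} (hA : A.IsHermitian) :
    (A * A).trace = ∑ i, (((hA.eigenvalues i)^2 : ℝ) : ℂ) := by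
  conv_lhs => rw [hA.spectral_theorem, Unitary.conjStarAlgAut_apply, SRC_conj_mul (SRC_star_mul_unitary hA)]
  rw [Matrix.trace_mul_cycle, SRC_star_mul_unitary hA, Matrix.one_mul,
    Matrix.diagonal_mul_diagonal, Matrix.trace_diagonal]
  apply Finset.sum_congr rfl
  intro i _
  show ((hA.eigenvalues i : ℝ) : ℂ) * ((hA.eigenvalues i : ℝ) : ℂ) = _
  push_cast
  ring

lemma rtr_sq_le_one {A : Matrix ι ι ℂ} (hA : A.PosSemidef) (htr : A.trace = 1) :
    rtr (A * A) ≤ 1 := by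
  have hH := hA.1
  have h0 : ((∑ i, hH.eigenvalues i : ℝ) : ℂ) = 1 := by
    rw [← htr, trace_eq_sum_eigenvalues hH]
    push_cast
    ring
  have h1 : ∑ i, hH.eigenvalues i = 1 := by exact_mod_cast h0
  have h2 : rtr (A * A) = ∑ i, (hH.eigenvalues i)^2 := by
    rw [rtr, trace_sq_eq_sum_eigenvalues_sq hH,
      show ∑ i, (((hH.eigenvalues i)^2 : ℝ) : ℂ) = ((∑ i, (hH.eigenvalues i)^2 : ℝ) : ℂ) by
        push_cast; ring,
      Complex.ofReal_re]
  rw [h2]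
  calc ∑ i, (hH.eigenvalues i)^2 ≤ ∑ i, hH.eigenvalues i := by
        apply Finset.sum_le_sum
        intro i _
        have hnn := hA.eigenvalues_nonneg i
        have hle : hH.eigenvalues i ≤ 1 := by
          rw [← h1]
          exact Finset.single_le_sum (fun j _ => hA.eigenvalues_nonneg j) (Finset.mem_univ i)
        nlinarith
    _ = 1 := h1

lemma filter_card_le {n : ℕ} {s : Fin n → Fin 4} (hs : s ≠ fun _ => 0) :
    ((Finset.univ.filter (fun i => s i = 0)).card : ℝ) ≤ (n : ℝ) - 1 := by
  obtain ⟨i, hi⟩ := Function.ne_iff.mp hs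
  have hsub : Finset.univ.filter (fun i => s i = 0) ⊆ Finset.univ.erase i := by
    intro j hj
    rw [Finset.mem_erase]
    refine ⟨?_, Finset.mem_univ j⟩
    intro hji
    subst hji
    exact hi (Finset.mem_filter.mp hj).2
  have hcard := Finset.card_le_card hsub
  rw [Finset.card_erase_of_mem (Finset.mem_univ i), Finset.card_univ, Fintype.card_fin] at hcard
  have hn1 : 1 ≤ n := by
    rcases Nat.eq_zero_or_pos n with h0 | h1
    · exfalso; subst h0; exact absurd (Subsingleton.elim _ _) hs
    · exact h1
  have hc := (Nat.cast_le (α := ℝ)).mpr hcard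
  rw [Nat.cast_sub hn1] at hc
  simpa using hc

lemma key_log (N : ℝ) (hN : 1 ≤ N) (D E : ℝ) (hD1 : 1 ≤ D) (hE1 : 1 ≤ E)
    (hlogD : Real.log D ≤ N) (hE : E ≤ 1 + ((N - 1)/N)^2 * (D - 1)) :
    Real.log E ≤ (1 - 1/(2*N^2)) * Real.log D := by
  have hN0 : 0 < N := lt_of_lt_of_le one_pos hN
  set A := D - 1 with hA
  have hA0 : 0 ≤ A := by rw [hA]; linarith
  set c : ℝ := ((N - 1)/N)^2 with hc
  have hc0 : 0 ≤ c := sq_nonneg _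
  have hc1 : c ≤ 1 := by
    rw [hc, div_pow]
    apply div_le_one_of_le₀
    · nlinarith
    · positivity
  have hcA1 : (1:ℝ) ≤ 1 + c * A := by nlinarith
  have h1A : (0:ℝ) < 1 + A := by linarith
  have hD : D = 1 + A := by rw [hA]; ring
  set L := Real.log (1 + A) with hL
  have hL0 : 0 ≤ L := Real.log_nonneg (by linarith)
  have step1 : Real.log E ≤ Real.log (1 + c * A) :=
    Real.log_le_log (by linarith) hE
  have step2 : Real.log (1 + c * A) - L ≤ -((1 - c) * A / (1 + A)) := by
    rw [hL, ← Real.log_div (by linarith) (by linarith)]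
    calc Real.log ((1 + c * A) / (1 + A)) ≤ (1 + c * A) / (1 + A) - 1 :=
          Real.log_le_sub_one_of_pos (by positivity)
      _ = -((1 - c) * A / (1 + A)) := by field_simp; ring
  have h1c : 1 - c = (2*N - 1)/N^2 := by
    rw [hc]
    field_simp
    ring
  have step3 : (1/(2*N^2)) * L ≤ (1 - c) * A / (1 + A) := by
    rw [h1c, show (1/(2*N^2)) * L = L / (2*N^2) by ring,
      show (2*N - 1)/N^2 * A / (1 + A) = ((2*N - 1) * A / N^2) / (1 + A) by ring,
      div_le_div_iff₀ (by positivity) h1A, div_mul_eq_mul_div,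
      le_div_iff₀ (by positivity : (0:ℝ) < N^2)]
    -- goal : L * (1 + A) * N^2 ≤ (2*N - 1) * A * (2*N^2) after clearing
    rcases le_or_gt A 1 with hA1 | hA1
    · have hlog : L ≤ A := by
        rw [hL]
        calc Real.log (1 + A) ≤ (1 + A) - 1 := Real.log_le_sub_one_of_pos h1A
          _ = A := by ring
      have q1 : L * ((1+A) * N^2) ≤ A * ((1+A) * N^2) :=
        mul_le_mul_of_nonneg_right hlog (by positivity)
      have q2 : A * ((1+A) * N^2) ≤ A * (2 * N^2) := by
        apply mul_le_mul_of_nonneg_left _ hA0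
        nlinarith [sq_nonneg N, mul_nonneg (by linarith : (0:ℝ) ≤ 1 - A) (sq_nonneg N)]
      have q3 : A * (2*N^2) ≤ (2*N - 1) * A * (2*N^2) := by
        nlinarith [mul_nonneg (mul_nonneg hA0 (sq_nonneg N)) (by linarith : (0:ℝ) ≤ 2*N - 2)]
      nlinarith [q1, q2, q3]
    · have hlog : L ≤ N := by rw [hL, ← hD]; exact hlogD
      have e1 : 1 + A ≤ 2*A := by linarith
      have p1 : L * ((1 + A) * N^2) ≤ N * ((1 + A) * N^2) :=
        mul_le_mul_of_nonneg_right hlog (by positivity)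
      have p2 : N * ((1 + A) * N^2) ≤ N * ((2*A) * N^2) := by
        apply mul_le_mul_of_nonneg_left _ hN0.le
        apply mul_le_mul_of_nonneg_right e1 (by positivity)
      nlinarith [p1, p2, mul_nonneg (mul_nonneg hA0 (sq_nonneg N)) (by linarith : (0:ℝ) ≤ 2*N - 2)]
  have hcomb : Real.log E ≤ L - (1/(2*N^2)) * L := by
    have := le_trans step1 (by linarith : Real.log (1 + c * A) ≤ L - (1/(2*N^2)) * L)
    exact this
  rw [hD, ← hL]
  calc Real.log E ≤ L - (1/(2*N^2)) * L := hcomb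
    _ = (1 - 1/(2*N^2)) * L := by ring

end Layer4

/-- Entropy production of the uniform random Pauli error channel on
`n` qubits. -/
theorem statement_18 (n : ℕ) (hn : 1 ≤ n)
    (ρ : Matrix (Fin n → Fin 2) (Fin n → Fin 2) ℂ) (hρ : IsState ρ) :
    sandDiv 2 ((((n : ℂ))⁻¹ • ∑ i : Fin n, localApply n fullyDepolQubit i) ρ)
        (((2 ^ n : ℂ))⁻¹ • (1 : Matrix (Fin n → Fin 2) (Fin n → Fin 2) ℂ)) ≤
      (1 - 1/(2 * (n : ℝ) ^ 2)) *
        sandDiv 2 ρ (((2 ^ n : ℂ))⁻¹ • (1 : Matrix (Fin n → Fin 2) (Fin n → Fin 2) ℂ)) := by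
  classical
  have hρH : ρ.IsHermitian := hρ.1.1
  have hn' : (1:ℝ) ≤ (n:ℝ) := by exact_mod_cast hn
  have hnne : (n:ℝ) ≠ 0 := by positivity
  have hnneC : (n:ℂ) ≠ 0 := by exact_mod_cast Nat.cast_ne_zero.mpr (by omega)
  set T : Matrix (Fin n → Fin 2) (Fin n → Fin 2) ℂ →ₗ[ℂ] Matrix (Fin n → Fin 2) (Fin n → Fin 2) ℂ :=
    (((n : ℂ))⁻¹ • ∑ i : Fin n, localApply n fullyDepolQubit i) with hTdef
  -- hermiticity of T ρ
  have hTρH : (T ρ).IsHermitian := by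
    have happ : T ρ = ((n:ℂ))⁻¹ • ∑ i : Fin n, localApply n fullyDepolQubit i ρ := by
      rw [hTdef, LinearMap.smul_apply, LinearMap.sum_apply]
    have hsum : (∑ i : Fin n, localApply n fullyDepolQubit i ρ).IsHermitian := by
      unfold Matrix.IsHermitian
      rw [Matrix.conjTranspose_sum]
      exact Finset.sum_congr rfl fun i _ => (local_herm i hρH)
    rw [happ]
    unfold Matrix.IsHermitian
    rw [Matrix.conjTranspose_smul, hsum]
    congr 1
    simp
  -- rewrite the reference state
  have hσ : ((2 ^ n : ℂ))⁻¹ = ((((2:ℝ)^n)⁻¹ : ℝ) : ℂ) := by push_cast; ring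
  rw [hσ, sandDiv_two_smul_one (by positivity) hTρH, sandDiv_two_smul_one (by positivity) hρH,
    inv_inv]
  -- Pauli expansion of ρ
  set f : (Fin n → Fin 4) → ℂ := fun s => ((2:ℂ)^n)⁻¹ * coef s ρ with hfdef
  have hexp : ρ = ∑ s, f s • PS s := by
    conv_lhs => rw [coef_expansion ρ]
    rw [Finset.smul_sum]
    simp_rw [smul_smul]
    rfl
  -- action of T on Pauli strings
  set m : (Fin n → Fin 4) → ℕ := fun s => (Finset.univ.filter (fun i => s i = 0)).card with hmdef
  have hT_PS : ∀ s, T (PS s) = (((m s : ℂ))/n) • PS s := by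
    intro s
    rw [hTdef, LinearMap.smul_apply, LinearMap.sum_apply]
    simp_rw [local_PS]
    have h1 : ∑ i : Fin n, (if s i = 0 then PS s else (0 : Matrix (Fin n → Fin 2) (Fin n → Fin 2) ℂ))
        = ∑ i : Fin n, (if s i = 0 then (1:ℂ) else 0) • PS s := by
      apply Finset.sum_congr rfl
      intro i _
      split <;> simp
    rw [h1, ← Finset.sum_smul, Finset.sum_boole, smul_smul, hmdef]
    congr 1
    rw [div_eq_mul_inv]
    ring
  -- Pauli expansion of T ρ
  set g : (Fin n → Fin 4) → ℂ := fun s => ((m s : ℂ)/n) * f s with hgdef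
  have hTexp : T ρ = ∑ s, g s • PS s := by
    conv_lhs => rw [hexp]
    rw [map_sum]
    apply Finset.sum_congr rfl
    intro s _
    rw [map_smul, hT_PS s, smul_smul, hgdef]
    congr 1
    ring
  -- trace computations
  have hR1 : rtr (ρ * ρ) = (2:ℝ)^n * ∑ s, Complex.normSq (f s) := rtr_sq_expansion hρH f hexp
  have hR2 : rtr (T ρ * T ρ) = (2:ℝ)^n * ∑ s, Complex.normSq (g s) := rtr_sq_expansion hTρH g hTexp
  set DD : ℝ := ∑ s, Complex.normSq (coef s ρ) with hDDdef
  set EE : ℝ := ∑ s, ((m s : ℝ)/n)^2 * Complex.normSq (coef s ρ) with hEEdef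
  have hfnorm : ∀ s, Complex.normSq (f s) = ((2:ℝ)^n)⁻¹^2 * Complex.normSq (coef s ρ) := by
    intro s
    rw [hfdef]
    simp only
    rw [Complex.normSq_mul, ← Complex.ofReal_ofNat, ← Complex.ofReal_pow, ← Complex.ofReal_inv,
      Complex.normSq_ofReal]
    ring
  have hgnorm : ∀ s, Complex.normSq (g s)
      = ((m s : ℝ)/n)^2 * (((2:ℝ)^n)⁻¹^2 * Complex.normSq (coef s ρ)) := by
    intro s
    rw [hgdef]
    simp only
    rw [Complex.normSq_mul, hfnorm s]
    congr 1
    rw [show ((m s : ℂ)/n) = Complex.ofReal ((m s : ℝ)/(n:ℝ)) by push_cast; ring,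
      Complex.normSq_ofReal]
    ring
  have hDD : (2:ℝ)^n * rtr (ρ * ρ) = DD := by
    rw [hR1, hDDdef, Finset.mul_sum, Finset.mul_sum]
    apply Finset.sum_congr rfl
    intro s _
    rw [hfnorm s]
    have h2n : ((2:ℝ)^n) ≠ 0 := by positivity
    field_simp
  have hEE : (2:ℝ)^n * rtr (T ρ * T ρ) = EE := by
    rw [hR2, hEEdef, Finset.mul_sum, Finset.mul_sum]
    apply Finset.sum_congr rfl
    intro s _
    rw [hgnorm s]
    have h2n : ((2:ℝ)^n) ≠ 0 := by positivity
    field_simp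
  rw [hDD, hEE]
  -- key numeric facts
  set s0 : Fin n → Fin 4 := fun _ => 0 with hs0def
  have hcs0 : coef s0 ρ = 1 := by rw [hs0def, coef_zero_eq_trace, hρ.2]
  have hms0 : m s0 = n := by
    rw [hmdef, hs0def]
    simp
  have hDD1 : 1 ≤ DD := by
    rw [hDDdef]
    calc (1:ℝ) = Complex.normSq (coef s0 ρ) := by rw [hcs0, Complex.normSq_one]
      _ ≤ ∑ s, Complex.normSq (coef s ρ) :=
        Finset.single_le_sum (f := fun s => Complex.normSq (coef s ρ))
          (fun s _ => Complex.normSq_nonneg _) (Finset.mem_univ s0)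
  have hEE1 : 1 ≤ EE := by
    rw [hEEdef]
    calc (1:ℝ) = ((m s0 : ℝ)/n)^2 * Complex.normSq (coef s0 ρ) := by
          rw [hms0, hcs0, Complex.normSq_one, div_self hnne]; norm_num
      _ ≤ ∑ s, ((m s : ℝ)/n)^2 * Complex.normSq (coef s ρ) :=
        Finset.single_le_sum (f := fun s => ((m s : ℝ)/n)^2 * Complex.normSq (coef s ρ))
          (fun s _ => mul_nonneg (sq_nonneg _) (Complex.normSq_nonneg _)) (Finset.mem_univ s0)
  have hDDle : DD ≤ (2:ℝ)^n := by
    rw [← hDD]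
    have := rtr_sq_le_one hρ.1 hρ.2
    nlinarith [this, pow_pos (by norm_num : (0:ℝ) < 2) n]
  have hlogDD : Real.log DD ≤ (n:ℝ) := by
    calc Real.log DD ≤ Real.log ((2:ℝ)^n) := Real.log_le_log (by linarith) hDDle
      _ = (n:ℝ) * Real.log 2 := by rw [Real.log_pow]
      _ ≤ (n:ℝ) * 1 := by
          apply mul_le_mul_of_nonneg_left _ (by positivity)
          calc Real.log 2 ≤ 2 - 1 := Real.log_le_sub_one_of_pos (by norm_num)
            _ = 1 := by norm_num
      _ = (n:ℝ) := by ring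
  have hEEbound : EE ≤ 1 + (((n:ℝ) - 1)/n)^2 * (DD - 1) := by
    rw [hEEdef, hDDdef]
    rw [← Finset.add_sum_erase _ _ (Finset.mem_univ s0),
      ← Finset.add_sum_erase _ (fun s => Complex.normSq (coef s ρ)) (Finset.mem_univ s0)]
    rw [hcs0, hms0, Complex.normSq_one, div_self hnne]
    have hterm : ∀ s ∈ Finset.univ.erase s0,
        ((m s : ℝ)/n)^2 * Complex.normSq (coef s ρ)
          ≤ (((n:ℝ) - 1)/n)^2 * Complex.normSq (coef s ρ) := by
      intro s hs
      have hsne : s ≠ s0 := Finset.ne_of_mem_erase hs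
      have hmle : ((m s : ℝ)) ≤ (n:ℝ) - 1 := filter_card_le (by rw [hs0def] at hsne; exact hsne)
      have hm0 : (0:ℝ) ≤ (m s : ℝ)/n := div_nonneg (Nat.cast_nonneg _) (Nat.cast_nonneg _)
      have hfr : ((m s : ℝ)/n) ≤ ((n:ℝ) - 1)/n := by gcongr
      have hsq : ((m s : ℝ)/n)^2 ≤ (((n:ℝ) - 1)/n)^2 := by
        apply pow_le_pow_left₀ hm0 hfr
      exact mul_le_mul_of_nonneg_right hsq (Complex.normSq_nonneg _)
    have hsum := Finset.sum_le_sum hterm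
    rw [← Finset.mul_sum] at hsum
    have hre : (1:ℝ)^2 * 1 = 1 := by norm_num
    rw [hre]
    linarith [hsum]
  exact key_log (n:ℝ) hn' DD EE hDD1 hEE1 hlogDD hEEbound


end SRC
end
end
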